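/- arXiv:1612.03607 — 3 statements merged into one kernel-verified Lean document; each statement's English description precedes it below -/
import Mathlib

section
/- Let D be a digraph, s a vertex of D such that every vertex of D is reachable from s, let B_s be the diblock of s in D, and let T be an out-tree in D with ℓ leaves whose root r lies in B_s. Then D contains an out-tree rooted at s with at least (ℓ-1)/2 leaves. -/
namespace CutPaper

variable {V : Type*}

/-- A directed path in the digraph `A`, given as a nonempty list of distinct
vertices from `u` to `v` with consecutive vertices joined by arcs. -/
def IsPath (A : V → V → Prop) (p : List V) (u v : V) : Prop :=
  p.Chain' A ∧ p.head? = some u ∧ p.getLast? = some v ∧ p.Nodup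

/-- `v` is reachable from `u` in the digraph `A`. -/
def Reaches (A : V → V → Prop) (u v : V) : Prop := ∃ p, IsPath A p u v

/-- Two paths from `r` to `v` are internally disjoint: they share only `r` and `v`. -/
def IntDisj (p q : List V) (r v : V) : Prop :=
  ∀ x, x ∈ p → x ∈ q → x = r ∨ x = v

/-- `v` is bi-reachable from `r`: there are two (distinct) internally
vertex-disjoint paths from `r` to `v`. -/
def BiReachable (A : V → V → Prop) (r v : V) : Prop :=
  ∃ p q, p ≠ q ∧ IsPath A p r v ∧ IsPath A q r v ∧ IntDisj p q r v

/-- The diblock of `r`: bi-reachable vertices together with `r` and its out-neighbours. -/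
def diblock (A : V → V → Prop) (r : V) : Set V :=
  {v | BiReachable A r v} ∪ {r} ∪ {v | A r v}

/-- The subdigraph of `A` induced on a vertex set `S`. -/
def Asub (A : V → V → Prop) (S : Set V) : V → V → Prop :=
  fun u v => A u v ∧ u ∈ S ∧ v ∈ S

/-- The path `p` meets the set `B` for the last time in `x`. -/
def LastTouch (B : Set V) (p : List V) (x : V) : Prop :=
  ∃ p₁ p₂, p = p₁ ++ x :: p₂ ∧ x ∈ B ∧ ∀ y ∈ p₂, y ∉ B

/-- `T` is an out-tree with vertex set `S` and root `r`, as a subdigraph of `A`. -/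
structure IsOutTree (A T : V → V → Prop) (S : Set V) (r : V) : Prop where
  sub : ∀ u v, T u v → A u v
  mem : ∀ u v, T u v → u ∈ S ∧ v ∈ S
  root_mem : r ∈ S
  no_in_root : ∀ u, ¬ T u r
  unique_in : ∀ v ∈ S, v ≠ r → ∃! u, T u v
  reach : ∀ v ∈ S, Reaches T r v

/-- `T` is an in-tree with vertex set `S` and root `r`, as a subdigraph of `A`. -/
def IsInTree (A T : V → V → Prop) (S : Set V) (r : V) : Prop :=
  IsOutTree (fun u v => A v u) (fun u v => T v u) S r

/-- The leaves (vertices of out-degree zero) of an out-tree `T` on vertex set `S`. -/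
def leaves (T : V → V → Prop) (S : Set V) : Set V :=
  {v | v ∈ S ∧ ∀ u, ¬ T v u}

/-- The leaves (vertices of in-degree zero) of an in-tree `T` on vertex set `S`. -/
def inLeaves (T : V → V → Prop) (S : Set V) : Set V :=
  {v | v ∈ S ∧ ∀ u, ¬ T u v}

/-- The raw data of a rooted cut decomposition: a node set, a parent map,
and an assignment of diblocks to nodes. -/
structure PreDecomp (V : Type*) where
  N : Set V
  parent : V → V
  B : V → Set V

/-- One step up the decomposition tree rooted at `r`. -/
def Step (d : PreDecomp V) (r : V) (a b : V) : Prop :=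
  a ∈ d.N ∧ a ≠ r ∧ d.parent a = b

/-- `x` is an ancestor (not necessarily proper) of `y` in the decomposition tree. -/
def Anc (d : PreDecomp V) (r : V) (x y : V) : Prop :=
  Relation.ReflTransGen (Step d r) y x

/-- `y` is a child of `x` in the decomposition tree. -/
def IsChild (d : PreDecomp V) (r : V) (y x : V) : Prop :=
  y ∈ d.N ∧ y ≠ r ∧ d.parent y = x

/-- `B*_x`: the union of the diblocks over the subtree rooted at `x`. -/
def Bstar (d : PreDecomp V) (r : V) (x : V) : Set V :=
  {v | ∃ y ∈ d.N, Anc d r x y ∧ v ∈ d.B y}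

/-- The partition class `X_y` of a bottleneck `y` of the diblock of `x`
inside `B*_x`: the vertices below `B x` whose access paths from `x`
leave `B x` for the last time at `y`. -/
def PartClass (A : V → V → Prop) (d : PreDecomp V) (r x y : V) : Set V :=
  {v | v ∈ Bstar d r x ∧ v ∉ d.B x ∧
    ∀ p, IsPath (Asub A (Bstar d r x)) p x v → LastTouch (d.B x) p y}

/-- `d` is the `r`-rooted cut decomposition of the digraph `A`:
the tree is well-founded towards the root `r`, the diblocks cover all vertices,
each `B x` is the diblock of `x` in the subdigraph induced on `B*_x`,
the children of `x` are exactly the bottlenecks of `B x`, and the subtree of a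
child `y` spans exactly `{y}` together with the partition class of `y`. -/
structure IsCutDecomp (A : V → V → Prop) (r : V) (d : PreDecomp V) : Prop where
  root_mem : r ∈ d.N
  parent_mem : ∀ x ∈ d.N, x ≠ r → d.parent x ∈ d.N
  tree : ∀ x ∈ d.N, Anc d r r x
  cover : Bstar d r r = Set.univ
  diblock_eq : ∀ x ∈ d.N, d.B x = diblock (Asub A (Bstar d r x)) x
  child_iff : ∀ x ∈ d.N, ∀ y,
    IsChild d r y x ↔ (y ∈ d.B x ∧ y ≠ x ∧ (PartClass A d r x y).Nonempty)
  child_part : ∀ x ∈ d.N, ∀ y, IsChild d r y x →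
    Bstar d r y = insert y (PartClass A d r x y)


lemma isPath_singleton (B : V → V → Prop) (u : V) : IsPath B [u] u u :=
  ⟨List.isChain_singleton u, rfl, rfl, by simp⟩

lemma reaches_refl (B : V → V → Prop) (u : V) : Reaches B u u :=
  ⟨[u], isPath_singleton B u⟩

lemma path_prefix {B : V → V → Prop} {q : List V} {u w v : V}
    (hq : IsPath B q u w) (hv : v ∈ q) : Reaches B u v := by
  obtain ⟨q₁, q₂, rfl⟩ := List.append_of_mem hv
  obtain ⟨hc, hh, _, hn⟩ := hq
  refine ⟨q₁ ++ [v], hc.prefix ⟨q₂, by simp⟩, ?_, by simp, ?_⟩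
  · cases q₁ <;> simpa using hh
  · exact hn.sublist ((List.cons_sublist_cons.mpr (List.nil_sublist q₂)).append_left q₁)

lemma reaches_snoc {B : V → V → Prop} {s u v : V} (h : Reaches B s u) (e : B u v) :
    Reaches B s v := by
  obtain ⟨p, hp⟩ := h
  by_cases hv : v ∈ p
  · exact path_prefix hp hv
  · obtain ⟨hc, hh, hl, hn⟩ := hp
    have hpne : p ≠ [] := by rintro rfl; simp at hh
    refine ⟨p ++ [v], ?_, ?_, by simp, ?_⟩
    · show List.IsChain B (p ++ [v]); rw [List.isChain_append]
      refine ⟨hc, List.isChain_singleton v, ?_⟩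
      intro x hx y hy
      simp only [List.head?_cons, Option.mem_def, Option.some.injEq] at hy
      rw [hl] at hx
      simp only [Option.mem_def, Option.some.injEq] at hx
      subst hx; subst hy; exact e
    · rwa [List.head?_append_of_ne_nil _ hpne]
    · rw [List.nodup_append]
      exact ⟨hn, List.nodup_singleton v, by intro a ha b hb h; rw [List.mem_singleton] at hb; subst hb; subst h; exact hv ha⟩

lemma path_unsnoc {B : V → V → Prop} {q : List V} {r v : V}
    (hq : IsPath B q r v) (hvr : v ≠ r) :
    ∃ u q', IsPath B q' r u ∧ B u v ∧ q'.length < q.length := by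
  obtain ⟨hc, hh, hl, hn⟩ := hq
  have hqne : q ≠ [] := by rintro rfl; simp at hh
  have hlast : q.getLast hqne = v := by
    rw [List.getLast?_eq_getLast_of_ne_nil hqne] at hl
    exact (Option.some.inj hl)
  have hq' : q = q.dropLast ++ [v] := by
    conv_lhs => rw [← List.dropLast_append_getLast hqne, hlast]
  have hdne : q.dropLast ≠ [] := by
    intro h
    rw [h, List.nil_append] at hq'
    rw [hq'] at hh
    exact hvr (Option.some.inj hh)
  obtain ⟨c1, _, rel⟩ := List.isChain_append.mp (hq' ▸ hc)
  have hlast' : q.dropLast.getLast? = some (q.dropLast.getLast hdne) :=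
    List.getLast?_eq_getLast_of_ne_nil hdne
  refine ⟨q.dropLast.getLast hdne, q.dropLast, ⟨c1, ?_, hlast', ?_⟩, ?_, ?_⟩
  · rw [hq', List.head?_append_of_ne_nil _ hdne] at hh; exact hh
  · exact hn.sublist (List.dropLast_sublist q)
  · exact rel _ (by rw [hlast']; rfl) v rfl
  · rw [List.length_dropLast]
    have : 0 < q.length := List.length_pos_iff.mpr hqne
    omega

/-- consecutive-pair edges of a list. -/
def PEdge (p : List V) (u v : V) : Prop := ∃ i, p[i]? = some u ∧ p[i + 1]? = some v

lemma PEdge.mem_left {p : List V} {u v : V} (h : PEdge p u v) : u ∈ p := by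
  obtain ⟨i, hu, _⟩ := h; exact List.mem_of_getElem? hu

lemma PEdge.mem_right {p : List V} {u v : V} (h : PEdge p u v) : v ∈ p := by
  obtain ⟨i, _, hv⟩ := h; exact List.mem_of_getElem? hv

lemma PEdge.rel {A : V → V → Prop} {p : List V} (hc : p.Chain' A) {u v : V}
    (h : PEdge p u v) : A u v := by
  obtain ⟨i, hu, hv⟩ := h
  rw [List.getElem?_eq_some_iff] at hu hv
  obtain ⟨h1, rfl⟩ := hu
  obtain ⟨h2, rfl⟩ := hv
  have := List.isChain_iff_getElem.mp hc i (by omega)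
  simpa [List.get_eq_getElem] using this

lemma head?_eq_get0 {p : List V} {s : V} (hh : p.head? = some s) : p[0]? = some s := by
  cases p with
  | nil => simp at hh
  | cons a t => simpa using hh

lemma PEdge.ne_head {p : List V} (hn : p.Nodup) {s u : V} (hh : p.head? = some s)
    (h : PEdge p u s) : False := by
  obtain ⟨i, _, hv⟩ := h
  have hlen : i + 1 < p.length := (List.getElem?_eq_some_iff.mp hv).1
  have := (List.getElem?_inj hlen hn).mp (hv.trans (head?_eq_get0 hh).symm)
  omega

lemma exists_pEdge {p : List V} {v : V} (hv : v ∈ p) (hne : p.head? ≠ some v) :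
    ∃ u, PEdge p u v := by
  obtain ⟨i, hi, hgi⟩ := List.mem_iff_getElem.mp hv
  cases i with
  | zero =>
    exfalso
    apply hne
    cases p with
    | nil => simp at hi
    | cons a t => simpa using hgi
  | succ j =>
    exact ⟨p[j]'(by omega), j, List.getElem?_eq_getElem (by omega),
      by rw [List.getElem?_eq_getElem hi]; exact congrArg some hgi⟩

lemma pEdge_unique {p : List V} (hn : p.Nodup) {u u' v : V}
    (h : PEdge p u v) (h' : PEdge p u' v) : u = u' := by
  obtain ⟨i, hu, hv⟩ := h
  obtain ⟨j, hu', hv'⟩ := h'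
  have hi : i + 1 < p.length := (List.getElem?_eq_some_iff.mp hv).1
  have hij : i + 1 = j + 1 := (List.getElem?_inj hi hn).mp (hv.trans hv'.symm)
  have : i = j := by omega
  subst this
  rw [hu] at hu'
  exact Option.some.inj hu'

lemma pEdge_last {p : List V} (hn : p.Nodup) {r u : V} (hl : p.getLast? = some r)
    (h : PEdge p r u) : False := by
  obtain ⟨i, hu, hv⟩ := h
  have hlen : i + 1 < p.length := (List.getElem?_eq_some_iff.mp hv).1
  have h1 : p[p.length - 1]? = some r := by rw [← List.getLast?_eq_getElem?]; exact hl
  have : i = p.length - 1 := (List.getElem?_inj (by omega) hn).mp (hu.trans h1.symm)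
  omega


lemma graft {A T : V → V → Prop} {S : Set V} {r s : V} {p : List V}
    (hT : IsOutTree A T S r) (hp : IsPath A p s r) :
    ∃ T' S', IsOutTree A T' S' s ∧
      leaves T S \ {x | x ∈ p ∧ x ≠ r} ⊆ leaves T' S' := by
  classical
  obtain ⟨hc, hh, hl, hn⟩ := hp
  set T' : V → V → Prop := fun u v => PEdge p u v ∨ (T u v ∧ v ∉ p) with hT'def
  set S' : Set V := S ∪ {x | x ∈ p} with hS'def
  have hrp : r ∈ p := by
    rw [List.getLast?_eq_getElem?] at hl
    exact List.mem_of_getElem? hl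
  have hsp : s ∈ p := List.mem_of_getElem? (head?_eq_get0 hh)
  have hTp : IsPath T' p s r := by
    refine ⟨List.isChain_iff_getElem.mpr (fun i h => Or.inl ⟨i, ?_, ?_⟩), hh, hl, hn⟩
    · exact List.getElem?_eq_getElem (by omega)
    · exact List.getElem?_eq_getElem (by omega)
  have reachA : ∀ v ∈ p, Reaches T' s v := fun v hv => path_prefix hTp hv
  have reachS : ∀ n (v : V), v ∈ S → (∃ q, IsPath T q r v ∧ q.length ≤ n) →
      Reaches T' s v := by
    intro n
    induction n with
    | zero =>
      rintro v hv ⟨q, hq, hlen⟩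
      exfalso
      have : q = [] := List.length_eq_zero_iff.mp (Nat.le_zero.mp hlen)
      rw [this] at hq
      exact absurd hq.2.1 (by simp)
    | succ n ih =>
      rintro v hv ⟨q, hq, hlen⟩
      by_cases hvp : v ∈ p
      · exact reachA v hvp
      · have hvr : v ≠ r := fun h => hvp (h ▸ hrp)
        obtain ⟨u, q', hq', e, hlt⟩ := path_unsnoc hq hvr
        have hu : u ∈ S := (hT.mem _ _ e).1
        exact reaches_snoc (ih u hu ⟨q', hq', by omega⟩) (Or.inr ⟨e, hvp⟩)
  refine ⟨T', S', ⟨?_, ?_, ?_, ?_, ?_, ?_⟩, ?_⟩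
  · rintro u v (h | ⟨h, _⟩)
    · exact h.rel hc
    · exact hT.sub u v h
  · rintro u v (h | ⟨h, _⟩)
    · exact ⟨Or.inr h.mem_left, Or.inr h.mem_right⟩
    · exact ⟨Or.inl (hT.mem u v h).1, Or.inl (hT.mem u v h).2⟩
  · exact Or.inr hsp
  · rintro u (h | ⟨_, hnp⟩)
    · exact PEdge.ne_head hn hh h
    · exact hnp hsp
  · intro v hv hvs
    by_cases hvp : v ∈ p
    · obtain ⟨u, hu⟩ := exists_pEdge hvp
        (fun h => hvs (Option.some.inj (hh.symm.trans h)).symm)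
      refine ⟨u, Or.inl hu, ?_⟩
      rintro u' (h' | ⟨_, hnp⟩)
      · exact pEdge_unique hn h' hu
      · exact absurd hvp hnp
    · have hvS : v ∈ S := hv.resolve_right hvp
      have hvr : v ≠ r := fun h => hvp (h ▸ hrp)
      obtain ⟨u, hu, huu⟩ := hT.unique_in v hvS hvr
      refine ⟨u, Or.inr ⟨hu, hvp⟩, ?_⟩
      rintro u' (h' | ⟨h', _⟩)
      · exact absurd h'.mem_right hvp
      · exact huu u' h'
  · rintro v (hv | hv)
    · obtain ⟨q, hq⟩ := hT.reach v hv
      exact reachS q.length v hv ⟨q, hq, le_rfl⟩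
    · exact reachA v hv
  · rintro x ⟨⟨hxS, hxleaf⟩, hxnot⟩
    refine ⟨Or.inl hxS, ?_⟩
    rintro u (h | ⟨h, _⟩)
    · have hxr : x = r := by
        by_contra hne
        exact hxnot ⟨h.mem_left, hne⟩
      exact pEdge_last hn hl (hxr ▸ h)
    · exact hxleaf u h


lemma graft_card [Fintype V] {A T : V → V → Prop} {S : Set V} {r s : V} {p : List V}
    (hT : IsOutTree A T S r) (hp : IsPath A p s r) :
    ∃ T' S', IsOutTree A T' S' s ∧
      (leaves T S).ncard - (leaves T S ∩ {x | x ∈ p ∧ x ≠ r}).ncard ≤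
        (leaves T' S').ncard := by
  obtain ⟨T', S', hT', hsub⟩ := graft hT hp
  refine ⟨T', S', hT', ?_⟩
  set L := leaves T S
  set P : Set V := {x | x ∈ p ∧ x ≠ r}
  have h1 : L \ (L ∩ P) ⊆ leaves T' S' := by
    rw [Set.diff_self_inter]; exact hsub
  calc L.ncard - (L ∩ P).ncard = (L \ (L ∩ P)).ncard :=
        (Set.ncard_diff Set.inter_subset_left (Set.toFinite _)).symm
    _ ≤ (leaves T' S').ncard := Set.ncard_le_ncard h1 (Set.toFinite _)


/-- an out-tree with `ℓ` leaves rooted inside the diblock of `s`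
yields an out-tree rooted at `s` with at least `(ℓ-1)/2` leaves. -/
theorem reroot_in_diblock {V : Type*} [Fintype V]
    (A : V → V → Prop) (s : V) (hreach : ∀ v, Reaches A s v)
    (T : V → V → Prop) (S : Set V) (r : V) (ℓ : ℕ)
    (hT : IsOutTree A T S r) (hr : r ∈ diblock A s)
    (hl : (leaves T S).ncard = ℓ) :
    ∃ (T' : V → V → Prop) (S' : Set V),
      IsOutTree A T' S' s ∧ (ℓ - 1) / 2 ≤ (leaves T' S').ncard := by
  classical
  by_cases hrs : r = s
  · exact ⟨T, S, hrs ▸ hT, by omega⟩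
  rcases hr with (hbi | hrr) | hadj
  · obtain ⟨p, q, _, hp, hq, hdisj⟩ := hbi
    set L := leaves T S with hL
    set Pp : Set V := {x | x ∈ p ∧ x ≠ r} with hPp
    set Pq : Set V := {x | x ∈ q ∧ x ≠ r} with hPq
    have hinter : (L ∩ Pp) ∩ (L ∩ Pq) ⊆ {s} := by
      rintro x ⟨⟨-, hxp, hxr⟩, ⟨-, hxq, -⟩⟩
      rcases hdisj x hxp hxq with h | h
      · exact h
      · exact absurd h hxr
    have hsum : (L ∩ Pp).ncard + (L ∩ Pq).ncard ≤ ℓ + 1 := by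
      have := Set.ncard_union_add_ncard_inter (L ∩ Pp) (L ∩ Pq)
        (Set.toFinite _) (Set.toFinite _)
      have h2 : ((L ∩ Pp) ∪ (L ∩ Pq)).ncard ≤ ℓ := by
        rw [← hl]
        exact Set.ncard_le_ncard (by
          rintro x (⟨hx, -⟩ | ⟨hx, -⟩) <;> exact hx) (Set.toFinite _)
      have h3 : ((L ∩ Pp) ∩ (L ∩ Pq)).ncard ≤ 1 := by
        simpa using Set.ncard_le_ncard hinter (Set.toFinite _)
      omega
    rcases le_total (L ∩ Pp).ncard (L ∩ Pq).ncard with hle | hle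
    · obtain ⟨T', S', hT', hcard⟩ := graft_card hT hp
      exact ⟨T', S', hT', by rw [← hL, ← hPp] at hcard; omega⟩
    · obtain ⟨T', S', hT', hcard⟩ := graft_card hT hq
      exact ⟨T', S', hT', by rw [← hL, ← hPq] at hcard; omega⟩
  · exact absurd hrr hrs
  · have hp : IsPath A [s, r] s r := by
      refine ⟨?_, rfl, rfl, ?_⟩
      · exact List.isChain_pair.mpr hadj
      · simpa using fun h : s = r => hrs h.symm
    obtain ⟨T', S', hT', hcard⟩ := graft_card hT hp
    refine ⟨T', S', hT', ?_⟩
    have h1 : (leaves T S ∩ {x | x ∈ [s, r] ∧ x ≠ r}).ncard ≤ 1 := by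
      have : leaves T S ∩ {x | x ∈ [s, r] ∧ x ≠ r} ⊆ {s} := by
        rintro x ⟨-, hx, hxr⟩
        rcases List.mem_pair.mp hx with h | h
        · exact h
        · exact absurd h hxr
      simpa using Set.ncard_le_ncard this (Set.toFinite _)
    omega


end CutPaper
end

section
/- Let H be a digraph, r a vertex from which every vertex of H is reachable, and v ∈ V(H) \ {r} with v not in the diblock B_r of r. Then there exists a vertex u ∉ {r, v} such that every directed r-v-path in H passes through u. Conversely, if v ∈ B_r \ ({r} ∪ N⁺(r)), then no such cut vertex exists. -/
namespace CutPaper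

variable {V : Type*}

/- ### list utilities -/
section lists
variable {α : Type*}

/-- consecutive pairs of a list -/
def arcs (l : List α) : List (α × α) := l.zip l.tail

lemma mem_arcs_iff {l : List α} {x y : α} :
    (x, y) ∈ arcs l ↔ ∃ i, ∃ h : i + 1 < l.length, l[i] = x ∧ l[i+1] = y := by
  unfold arcs
  rw [List.mem_iff_getElem]
  constructor
  · rintro ⟨i, h, he⟩
    have hlen : i < l.length ∧ i < l.length - 1 := by
      have := h; rw [List.length_zip, List.length_tail] at this; omega
    refine ⟨i, by omega, ?_⟩
    rw [List.getElem_zip] at he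
    have ht : l.tail[i]'(by rw [List.length_tail]; omega) = l[i+1]'(by omega) :=
      List.getElem_tail ..
    constructor
    · exact (congrArg Prod.fst he : _)
    · rw [← ht]; exact (congrArg Prod.snd he : _)
  · rintro ⟨i, h, hx, hy⟩
    refine ⟨i, by rw [List.length_zip, List.length_tail]; omega, ?_⟩
    rw [List.getElem_zip]
    have ht : l.tail[i]'(by rw [List.length_tail]; omega) = l[i+1]'(by omega) :=
      List.getElem_tail ..
    ext <;> simp [hx, ← hy, ht]

lemma chain'_arcs {R : α → α → Prop} {l : List α} (h : l.Chain' R) {x y : α}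
    (hxy : (x, y) ∈ arcs l) : R x y := by
  rw [mem_arcs_iff] at hxy
  obtain ⟨i, hi, hx, hy⟩ := hxy
  rw [List.Chain', List.isChain_iff_getElem] at h
  have := h i (by omega)
  simpa [List.get_eq_getElem, hx, hy] using this

lemma arcs_fst_mem {l : List α} {x y : α} (h : (x, y) ∈ arcs l) : x ∈ l := by
  rw [mem_arcs_iff] at h; obtain ⟨i, hi, hx, _⟩ := h
  exact hx ▸ List.getElem_mem _

lemma arcs_snd_mem {l : List α} {x y : α} (h : (x, y) ∈ arcs l) : y ∈ l := by
  rw [mem_arcs_iff] at h; obtain ⟨i, hi, _, hy⟩ := h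
  exact hy ▸ List.getElem_mem _

lemma exists_succ_arc {l : List α} {y : α} (hne : l ≠ []) (hy : y ∈ l)
    (hlast : y ≠ l.getLast hne) : ∃ z, (y, z) ∈ arcs l := by
  rw [List.mem_iff_getElem] at hy
  obtain ⟨i, hi, he⟩ := hy
  have : i + 1 < l.length := by
    rcases Nat.lt_or_ge (i+1) l.length with h | h
    · exact h
    · exfalso; apply hlast
      rw [List.getLast_eq_getElem]
      have : i = l.length - 1 := by omega
      subst this; rw [← he]
  exact ⟨l[i+1], mem_arcs_iff.mpr ⟨i, this, he, rfl⟩⟩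

lemma exists_pred_arc {l : List α} {y : α} (hne : l ≠ []) (hy : y ∈ l)
    (hhead : y ≠ l.head hne) : ∃ x, (x, y) ∈ arcs l := by
  rw [List.mem_iff_getElem] at hy
  obtain ⟨i, hi, he⟩ := hy
  have hi0 : i ≠ 0 := by
    rintro rfl; apply hhead; rw [List.head_eq_getElem, ← he]
  obtain ⟨j, rfl⟩ : ∃ j, i = j + 1 := ⟨i - 1, by omega⟩
  exact ⟨l[j], mem_arcs_iff.mpr ⟨j, hi, rfl, he⟩⟩

lemma arc_snd_ne_head {l : List α} (hnd : l.Nodup) {x y : α} (h : (x, y) ∈ arcs l)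
    (hne : l ≠ []) : y ≠ l.head hne := by
  rw [mem_arcs_iff] at h
  obtain ⟨i, hi, _, hy⟩ := h
  rw [List.head_eq_getElem, ← hy]
  intro hc
  have := (hnd.getElem_inj_iff).mp hc
  omega

lemma arc_fst_ne_getLast {l : List α} (hnd : l.Nodup) {x y : α} (h : (x, y) ∈ arcs l)
    (hne : l ≠ []) : x ≠ l.getLast hne := by
  rw [mem_arcs_iff] at h
  obtain ⟨i, hi, hx, _⟩ := h
  rw [List.getLast_eq_getElem, ← hx]
  intro hc
  have := (hnd.getElem_inj_iff).mp hc
  omega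

lemma arc_succ_unique {l : List α} (hnd : l.Nodup) {x y y' : α}
    (h : (x, y) ∈ arcs l) (h' : (x, y') ∈ arcs l) : y = y' := by
  rw [mem_arcs_iff] at h h'
  obtain ⟨i, hi, hx, hy⟩ := h
  obtain ⟨j, hj, hx', hy'⟩ := h'
  have : i = j := (hnd.getElem_inj_iff).mp (hx.trans hx'.symm)
  subst this; rw [← hy, ← hy']

lemma arc_pred_unique {l : List α} (hnd : l.Nodup) {x x' y : α}
    (h : (x, y) ∈ arcs l) (h' : (x', y) ∈ arcs l) : x = x' := by
  rw [mem_arcs_iff] at h h'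
  obtain ⟨i, hi, hx, hy⟩ := h
  obtain ⟨j, hj, hx', hy'⟩ := h'
  have : i + 1 = j + 1 := (hnd.getElem_inj_iff).mp (hy.trans hy'.symm)
  have : i = j := by omega
  subst this; rw [← hx, ← hx']

lemma arc_asymm {l : List α} (hnd : l.Nodup) {x y : α}
    (h : (x, y) ∈ arcs l) (h' : (y, x) ∈ arcs l) : False := by
  rw [mem_arcs_iff] at h h'
  obtain ⟨i, hi, hx, hy⟩ := h
  obtain ⟨j, hj, hy', hx'⟩ := h'
  have h1 : i + 1 = j := (hnd.getElem_inj_iff).mp (hy.trans hy'.symm)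
  have h2 : j + 1 = i := (hnd.getElem_inj_iff).mp (hx'.trans hx.symm)
  omega

end lists

/- ### path extraction -/
section lists2
variable {α : Type*}

lemma exists_last_occ {a : α} : ∀ {t : List α}, a ∈ t →
    ∃ t₁ t₂, t = t₁ ++ a :: t₂ ∧ a ∉ t₂ := by
  intro t
  induction t with
  | nil => intro h; simp at h
  | cons b t' ih =>
    intro h
    by_cases ha : a ∈ t'
    · obtain ⟨t₁, t₂, rfl, hn⟩ := ih ha
      exact ⟨b :: t₁, t₂, rfl, hn⟩
    · have : a = b := by
        rcases List.mem_cons.mp h with h | h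
        · exact h
        · exact absurd h ha
      subst this
      exact ⟨[], t', rfl, ha⟩

lemma toPath_aux {R : α → α → Prop} : ∀ (n : ℕ) (l : List α), l.length ≤ n → l ≠ [] → l.Chain' R →
    ∃ p : List α, p.Chain' R ∧ p.head? = l.head? ∧ p.getLast? = l.getLast? ∧ p.Nodup ∧
      ∀ x ∈ p, x ∈ l := by
  intro n
  induction n with
  | zero => intro l hl hne; exact absurd (List.length_eq_zero_iff.mp (by omega)) hne
  | succ n ih' =>
  intro l hl hne hch
  have ih : ∀ (l' : List α), l'.length < l.length → l' ≠ [] → l'.Chain' R →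
      ∃ p : List α, p.Chain' R ∧ p.head? = l'.head? ∧ p.getLast? = l'.getLast? ∧ p.Nodup ∧
      ∀ x ∈ p, x ∈ l' := fun l' hlt => ih' l' (by omega)
  obtain ⟨u, t, rfl⟩ : ∃ u t, l = u :: t := ⟨l.head hne, l.tail, (List.cons_head_tail hne).symm⟩
  by_cases hut : u ∈ t
  · obtain ⟨t₁, t₂, rfl, hn⟩ := exists_last_occ hut
    have hsub : ∃ p : List α, p.Chain' R ∧ p.head? = (u :: t₂).head? ∧
        p.getLast? = (u :: t₂).getLast? ∧ p.Nodup ∧ ∀ x ∈ p, x ∈ u :: t₂ := by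
      apply ih (u :: t₂) (by simp) (by simp)
      have : u :: (t₁ ++ u :: t₂) = (u :: t₁) ++ (u :: t₂) := by simp
      rw [this, List.Chain', List.isChain_append] at hch
      exact hch.2.1
    obtain ⟨p, h1, h2, h3, h4, h5⟩ := hsub
    refine ⟨p, h1, by simpa using h2, ?_, h4, ?_⟩
    · rw [h3]
      have h6 : u :: (t₁ ++ u :: t₂) = (u :: t₁) ++ (u :: t₂) := by simp
      rw [h6, List.getLast?_append, List.getLast?_eq_getLast (l := u :: t₂) (by simp)]
      simp
    · intro x hx
      have := h5 x hx
      simp at this ⊢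
      tauto
  · rcases t with _ | ⟨b, t'⟩
    · exact ⟨[u], by simp [List.Chain'], rfl, rfl, by simp, by simp⟩
    · obtain ⟨p, h1, h2, h3, h4, h5⟩ := ih (b :: t') (by simp) (by simp) hch.tail
      have hpne : p ≠ [] := by
        intro h; subst h; simp at h2
      have hRub : R u (p.head hpne) := by
        have hhb : p.head? = some b := by simpa using h2
        rw [List.head?_eq_head hpne] at hhb
        have : p.head hpne = b := by simpa using hhb
        rw [this]
        exact (List.isChain_cons_cons.mp hch).1
      refine ⟨u :: p, ?_, by simp, ?_, ?_, ?_⟩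
      · obtain ⟨c, p', rfl⟩ : ∃ c p', p = c :: p' := ⟨p.head hpne, p.tail, (List.cons_head_tail hpne).symm⟩
        exact List.isChain_cons_cons.mpr ⟨hRub, h1⟩
      · have h7 : (u :: p).getLast? = p.getLast? := by
          rw [List.getLast?_eq_getLast (by simp), List.getLast?_eq_getLast hpne,
            List.getLast_cons hpne]
        rw [h7, h3]
        rw [List.getLast?_eq_getLast (by simp : b :: t' ≠ []),
          List.getLast?_eq_getLast (by simp : u :: b :: t' ≠ []),
          List.getLast_cons (by simp : b :: t' ≠ [])]
      · refine List.nodup_cons.mpr ⟨fun hc => ?_, h4⟩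
        have := h5 u hc
        exact hut (by simpa using this)
      · intro x hx
        rcases List.mem_cons.mp hx with h | h
        · simp [h]
        · have := h5 x h; simp at this ⊢; tauto

lemma toPath {R : α → α → Prop} (l : List α) (hne : l ≠ []) (hch : l.Chain' R) :
    ∃ p : List α, p.Chain' R ∧ p.head? = l.head? ∧ p.getLast? = l.getLast? ∧ p.Nodup ∧
      ∀ x ∈ p, x ∈ l :=
  toPath_aux l.length l le_rfl hne hch

lemma reflTransGen_isPath {R : α → α → Prop} {a b : α}
    (h : Relation.ReflTransGen R a b) : ∃ p, IsPath R p a b := by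
  obtain ⟨l, hch, hlast⟩ := List.exists_isChain_cons_of_relationReflTransGen h
  have hch' : (a :: l).Chain' R := hch
  obtain ⟨p, h1, h2, h3, h4, _⟩ := toPath (a :: l) (by simp) hch'
  refine ⟨p, h1, by simpa using h2, ?_, h4⟩
  rw [h3, List.getLast?_eq_getLast (by simp), hlast]

end lists2

/- ### IsPath helpers -/
section isPath
variable {A B : V → V → Prop} {p : List V} {u v : V}

lemma IsPath.ne_nil (h : IsPath A p u v) : p ≠ [] := by
  intro hc; subst hc; simp [IsPath] at h

lemma IsPath.head_eq (h : IsPath A p u v) : p.head h.ne_nil = u := by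
  have := h.2.1; rw [List.head?_eq_head h.ne_nil] at this; simpa using this

lemma IsPath.getLast_eq (h : IsPath A p u v) : p.getLast h.ne_nil = v := by
  have := h.2.2.1; rw [List.getLast?_eq_getLast h.ne_nil] at this; simpa using this

lemma IsPath.start_mem (h : IsPath A p u v) : u ∈ p := by
  rw [← h.head_eq]; exact List.head_mem _

lemma IsPath.end_mem (h : IsPath A p u v) : v ∈ p := by
  rw [← h.getLast_eq]; exact List.getLast_mem _

lemma IsPath.nodup (h : IsPath A p u v) : p.Nodup := h.2.2.2

lemma IsPath.chain (h : IsPath A p u v) : p.Chain' A := h.1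

lemma IsPath.mono (h : IsPath A p u v) (hab : ∀ x y, A x y → B x y) : IsPath B p u v :=
  ⟨h.1.imp hab, h.2⟩

lemma IsPath.length_ge_two (h : IsPath A p u v) (hne : u ≠ v) : 2 ≤ p.length := by
  rcases p with _ | ⟨a, _ | ⟨b, t⟩⟩
  · exact absurd rfl h.ne_nil
  · exfalso; apply hne
    have h1 := h.head_eq; have h2 := h.getLast_eq
    simp at h1 h2; rw [← h1, ← h2]
  · simp

lemma IsPath.cons {b : V} (h : IsPath A p u v) (hb : A b u) (hnb : b ∉ p) :
    IsPath A (b :: p) b v := by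
  obtain ⟨c, t, rfl⟩ : ∃ c t, p = c :: t :=
    ⟨p.head h.ne_nil, p.tail, (List.cons_head_tail h.ne_nil).symm⟩
  have hc : c = u := by simpa using h.head_eq
  refine ⟨List.isChain_cons_cons.mpr ⟨hc ▸ hb, h.1⟩, by simp, ?_, List.nodup_cons.mpr ⟨hnb, h.nodup⟩⟩
  rw [← h.2.2.1]
  rw [List.getLast?_eq_getLast (by simp), List.getLast?_eq_getLast (by simp),
    List.getLast_cons (by simp : c :: t ≠ [])]

lemma IsPath.arc_mem (h : IsPath A p u v) {x y : V} (hxy : (x, y) ∈ arcs p) : A x y :=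
  chain'_arcs h.1 hxy

end isPath

/- ### the greedy walk lemma -/
lemma walkLemma [DecidableEq (V × V)] :
    ∀ (n : ℕ) (F : Finset (V × V)) (b v : V), F.card ≤ n → b ≠ v →
    (∀ w, w ≠ v → (w = b ∨ ∃ a, (a, w) ∈ F) → ∃ c, (w, c) ∈ F) →
    (∀ w, w ≠ v → ∀ a a', (a, w) ∈ F → (a', w) ∈ F → a = a') →
    (∀ a, (a, b) ∉ F) →
    ∃ p : List V, IsPath (fun x y => (x, y) ∈ F) p b v := by
  intro n
  induction n with
  | zero =>
    intro F b v hcard hbv hout _ _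
    obtain ⟨c, hc⟩ := hout b hbv (Or.inl rfl)
    exact absurd (Finset.card_pos.mpr ⟨_, hc⟩) (by omega)
  | succ n ih =>
    intro F b v hcard hbv hout hin hnb
    obtain ⟨c, hc⟩ := hout b hbv (Or.inl rfl)
    have hbc : b ≠ c := by rintro rfl; exact hnb b hc
    by_cases hcv : c = v
    · subst hcv
      exact ⟨[b, c], by simpa [List.Chain'] using hc, rfl, rfl, by simp [hbc]⟩
    · set F' := F.erase (b, c) with hF'
      have hsub : ∀ x, x ∈ F' → x ∈ F := fun x hx => Finset.mem_of_mem_erase hx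
      have hcard' : F'.card ≤ n := by
        have : F'.card < F.card := Finset.card_erase_lt_of_mem hc
        omega
      have hout' : ∀ w, w ≠ v → (w = c ∨ ∃ a, (a, w) ∈ F') → ∃ d, (w, d) ∈ F' := by
        intro w hwv hw
        rcases hw with rfl | ⟨a, haw⟩
        · obtain ⟨d, hd⟩ := hout w hwv (Or.inr ⟨b, hc⟩)
          refine ⟨d, Finset.mem_erase.mpr ⟨?_, hd⟩⟩
          intro hcon
          have hwb : w = b := congrArg Prod.fst hcon
          subst hwb
          exact hnb w hc
        · have haw' := hsub _ haw
          have hwb : w ≠ b := by rintro rfl; exact hnb a haw'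
          obtain ⟨d, hd⟩ := hout w hwv (Or.inr ⟨a, haw'⟩)
          refine ⟨d, Finset.mem_erase.mpr ⟨?_, hd⟩⟩
          intro hcon
          exact hwb (congrArg Prod.fst hcon)
      have hin' : ∀ w, w ≠ v → ∀ a a', (a, w) ∈ F' → (a', w) ∈ F' → a = a' :=
        fun w hwv a a' h1 h2 => hin w hwv a a' (hsub _ h1) (hsub _ h2)
      have hnc : ∀ a, (a, c) ∉ F' := by
        intro a hac
        have : a = b := hin c hcv a b (hsub _ hac) hc
        subst this
        exact (Finset.mem_erase.mp hac).1 rfl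
      obtain ⟨p, hp⟩ := ih F' c v hcard' hcv hout' hin' hnc
      have hbp : b ∉ p := by
        intro hbmem
        have hbhead : b ≠ p.head hp.ne_nil := by rw [hp.head_eq]; exact hbc
        obtain ⟨x, hx⟩ := exists_pred_arc hp.ne_nil hbmem hbhead
        exact hnb x (hsub _ (hp.arc_mem hx))
      have hp' : IsPath (fun x y => (x, y) ∈ F) p c v := hp.mono (fun x y h => hsub _ h)
      exact ⟨b :: p, hp'.cons hc hbp⟩

/- ### the residual digraph -/

/-- internal vertex of the path `P` from `r` to `v` -/
def Intl (P : List V) (r v w : V) : Prop := w ∈ P ∧ w ≠ r ∧ w ≠ v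

/-- residual digraph of the unit flow along `P` -/
def Dgr (A : V → V → Prop) (P : List V) (r v : V) : V × Bool → V × Bool → Prop := fun s t =>
  (s.2 = true ∧ t.2 = false ∧ A s.1 t.1) ∨
  (s.2 = false ∧ t.2 = true ∧ (t.1, s.1) ∈ arcs P) ∨
  (s.2 = false ∧ t.2 = true ∧ s.1 = t.1 ∧ ¬ Intl P r v s.1) ∨
  (s.2 = true ∧ t.2 = false ∧ s.1 = t.1 ∧ Intl P r v s.1)

/-- residual reachability -/
def Res (A : V → V → Prop) (P : List V) (r v : V) (w : V) (c : Bool) : Prop :=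
  Relation.ReflTransGen (Dgr A P r v) (r, true) (w, c)

section residual

variable {A : V → V → Prop} {r v : V} {P : List V} {W : List (V × Bool)}

lemma Res.base : Res A P r v r true := Relation.ReflTransGen.refl

lemma Res.fwd {a b : V} (h : Res A P r v a true) (hab : A a b) : Res A P r v b false :=
  h.tail (Or.inl ⟨rfl, rfl, hab⟩)

lemma Res.revArc {a b : V} (h : Res A P r v b false) (hab : (a, b) ∈ arcs P) :
    Res A P r v a true :=
  h.tail (Or.inr (Or.inl ⟨rfl, rfl, hab⟩))

lemma Res.vfwd {w : V} (h : Res A P r v w false) (hw : ¬ Intl P r v w) : Res A P r v w true :=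
  h.tail (Or.inr (Or.inr (Or.inl ⟨rfl, rfl, rfl, hw⟩)))

lemma Res.vrev {w : V} (h : Res A P r v w true) (hw : Intl P r v w) : Res A P r v w false :=
  h.tail (Or.inr (Or.inr (Or.inr ⟨rfl, rfl, rfl, hw⟩)))

variable (hP : IsPath A P r v) (hW : IsPath (Dgr A P r v) W (r, true) (v, false))
  (hvr : v ≠ r)

include hP hW hvr

lemma rF_not_mem : (r, false) ∉ W := by
  intro hmem
  have hne : (r, false) ≠ W.getLast hW.ne_nil := by
    rw [hW.getLast_eq]
    intro hc
    exact hvr (congrArg Prod.fst hc).symm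
  obtain ⟨s', hs'⟩ := exists_succ_arc hW.ne_nil hmem hne
  obtain ⟨c, bc⟩ := s'
  rcases hW.arc_mem hs' with ⟨h1, h2, h3⟩ | ⟨h1, h2, h3⟩ | ⟨h1, h2, h3, h4⟩ | ⟨h1, h2, h3, h4⟩
  · simp at h1
  · simp only at h2 h3
    subst h2
    exact arc_snd_ne_head hP.nodup h3 hP.ne_nil (by rw [hP.head_eq])
  · simp only at h2 h3
    subst h2
    have : c = r := h3.symm
    subst this
    exact arc_snd_ne_head hW.nodup hs' hW.ne_nil (by rw [hW.head_eq])
  · simp at h1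

lemma vT_not_mem : (v, true) ∉ W := by
  intro hmem
  have hne : (v, true) ≠ W.head hW.ne_nil := by
    rw [hW.head_eq]
    intro hc
    exact hvr (congrArg Prod.fst hc)
  obtain ⟨s, hs⟩ := exists_pred_arc hW.ne_nil hmem hne
  obtain ⟨c, bc⟩ := s
  rcases hW.arc_mem hs with ⟨h1, h2, h3⟩ | ⟨h1, h2, h3⟩ | ⟨h1, h2, h3, h4⟩ | ⟨h1, h2, h3, h4⟩
  · simp at h2
  · simp only at h1 h3
    subst h1
    exact arc_fst_ne_getLast hP.nodup h3 hP.ne_nil (by rw [hP.getLast_eq])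
  · simp only at h1 h3
    subst h1
    have : c = v := h3
    subst this
    exact arc_fst_ne_getLast hW.nodup hs hW.ne_nil (by rw [hW.getLast_eq])
  · simp at h2

lemma penult_not_mem (hm2 : 3 ≤ P.length) :
    ((P[P.length - 2]'(by omega), true)) ∉ W := by
  intro hmem
  have hylen : P.length - 2 < P.length := by omega
  have hne : ((P[P.length - 2]'hylen, true)) ≠ W.head hW.ne_nil := by
    rw [hW.head_eq]
    intro hc
    have h1 : P[P.length - 2]'hylen = r := congrArg Prod.fst hc
    have h0 : P[0]'(by omega) = r := by
      have := hP.head_eq; rw [List.head_eq_getElem] at this; exact this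
    have := (hP.nodup.getElem_inj_iff).mp (h1.trans h0.symm)
    omega
  obtain ⟨s, hs⟩ := exists_pred_arc hW.ne_nil hmem hne
  obtain ⟨c, bc⟩ := s
  rcases hW.arc_mem hs with ⟨h1, h2, h3⟩ | ⟨h1, h2, h3⟩ | ⟨h1, h2, h3, h4⟩ | ⟨h1, h2, h3, h4⟩
  · simp at h2
  · -- reverse arc: c = v, and (v,false) is a source in arcs W
    simp only at h1 h3
    subst h1
    have hPl : (P[P.length - 2]'hylen, P[P.length - 1]'(by omega)) ∈ arcs P :=
      mem_arcs_iff.mpr ⟨P.length - 2, by omega, rfl, by congr 1; omega⟩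
    have hcv : c = P[P.length - 1]'(by omega) := arc_succ_unique hP.nodup h3 hPl
    have hlastv : P[P.length - 1]'(by omega) = v := by
      have := hP.getLast_eq; rw [List.getLast_eq_getElem] at this; exact this
    rw [hlastv] at hcv
    subst hcv
    exact arc_fst_ne_getLast hW.nodup hs hW.ne_nil (by rw [hW.getLast_eq])
  · -- vertex forward: contradicts internality
    simp only at h1 h3 h4
    subst h1
    apply h4
    rw [h3]
    refine ⟨List.getElem_mem _, ?_, ?_⟩
    · intro hc
      have h0 : P[0]'(by omega) = r := by
        have := hP.head_eq; rw [List.head_eq_getElem] at this; exact this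
      have := (hP.nodup.getElem_inj_iff).mp (hc.trans h0.symm)
      omega
    · intro hc
      have hlastv : P[P.length - 1]'(by omega) = v := by
        have := hP.getLast_eq; rw [List.getLast_eq_getElem] at this; exact this
      have := (hP.nodup.getElem_inj_iff).mp (hc.trans hlastv.symm)
      omega
  · simp at h2

lemma noFwdP (hm2 : 3 ≤ P.length) {a b : V}
    (hfw : ((a, true), (b, false)) ∈ arcs W) (hab : (a, b) ∈ arcs P) : False := by
  by_cases hbv : b = v
  · obtain ⟨i, hi, hia, hib⟩ := mem_arcs_iff.mp hab
    have hlastv : P[P.length - 1]'(by omega) = v := by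
      have := hP.getLast_eq; rw [List.getLast_eq_getElem] at this; exact this
    have : i + 1 = P.length - 1 :=
      (hP.nodup.getElem_inj_iff).mp (hib.trans (hbv.trans hlastv.symm))
    have hia' : P[P.length - 2]'(by omega) = a := by rw [← hia]; congr 1; omega
    apply penult_not_mem hP hW hvr hm2
    rw [hia']
    exact arcs_fst_mem hfw
  · have hmem : (b, false) ∈ W := arcs_snd_mem hfw
    have hne : ((b, false) : V × Bool) ≠ W.getLast hW.ne_nil := by
      rw [hW.getLast_eq]
      intro hc
      exact hbv (congrArg Prod.fst hc)
    obtain ⟨s', hs'⟩ := exists_succ_arc hW.ne_nil hmem hne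
    obtain ⟨c, bc⟩ := s'
    rcases hW.arc_mem hs' with ⟨h1, h2, h3⟩ | ⟨h1, h2, h3⟩ | ⟨h1, h2, h3, h4⟩ | ⟨h1, h2, h3, h4⟩
    · simp at h1
    · simp only at h2 h3
      subst h2
      have : c = a := arc_pred_unique hP.nodup h3 hab
      subst this
      exact arc_asymm hW.nodup hfw hs'
    · simp only at h3 h4
      apply h4
      refine ⟨arcs_snd_mem hab, ?_, hbv⟩
      have hbh := arc_snd_ne_head hP.nodup hab hP.ne_nil
      rw [hP.head_eq] at hbh
      exact hbh
    · simp at h1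

lemma exitF {w : V} (hint : Intl P r v w) (hmem : (w, false) ∈ W) :
    ∃ a, (a, w) ∈ arcs P ∧ ((w, false), (a, true)) ∈ arcs W := by
  have hne : ((w, false) : V × Bool) ≠ W.getLast hW.ne_nil := by
    rw [hW.getLast_eq]
    intro hc
    exact hint.2.2 (congrArg Prod.fst hc)
  obtain ⟨s', hs'⟩ := exists_succ_arc hW.ne_nil hmem hne
  obtain ⟨c, bc⟩ := s'
  rcases hW.arc_mem hs' with ⟨h1, h2, h3⟩ | ⟨h1, h2, h3⟩ | ⟨h1, h2, h3, h4⟩ | ⟨h1, h2, h3, h4⟩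
  · simp at h1
  · simp only at h2 h3
    subst h2
    exact ⟨c, h3, hs'⟩
  · simp only at h3 h4
    exact absurd hint h4
  · simp at h1

lemma exitT {w : V} (hmem : (w, true) ∈ W) :
    (∃ c, ((w, true), (c, false)) ∈ arcs W ∧ c ≠ w ∧ A w c) ∨
      ((w, true), (w, false)) ∈ arcs W := by
  have hne : ((w, true) : V × Bool) ≠ W.getLast hW.ne_nil := by
    rw [hW.getLast_eq]
    intro hc
    simpa using congrArg Prod.snd hc
  obtain ⟨s', hs'⟩ := exists_succ_arc hW.ne_nil hmem hne
  obtain ⟨c, bc⟩ := s'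
  rcases hW.arc_mem hs' with ⟨h1, h2, h3⟩ | ⟨h1, h2, h3⟩ | ⟨h1, h2, h3, h4⟩ | ⟨h1, h2, h3, h4⟩
  · simp only at h2 h3
    subst h2
    by_cases hcw : c = w
    · subst hcw; exact Or.inr hs'
    · exact Or.inl ⟨c, hs', hcw, h3⟩
  · simp at h1
  · simp at h1
  · simp only at h2 h3
    subst h2
    subst h3
    exact Or.inr hs'

lemma entryF {w : V} (hmem : (w, false) ∈ W) :
    ∃ a, ((a, true), (w, false)) ∈ arcs W := by
  have hne : ((w, false) : V × Bool) ≠ W.head hW.ne_nil := by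
    rw [hW.head_eq]
    intro hc
    simpa using congrArg Prod.snd hc
  obtain ⟨s, hs⟩ := exists_pred_arc hW.ne_nil hmem hne
  obtain ⟨c, bc⟩ := s
  rcases hW.arc_mem hs with ⟨h1, h2, h3⟩ | ⟨h1, h2, h3⟩ | ⟨h1, h2, h3, h4⟩ | ⟨h1, h2, h3, h4⟩
  · simp only at h1; subst h1; exact ⟨c, hs⟩
  · simp at h2
  · simp at h2
  · simp only at h1; subst h1; exact ⟨c, hs⟩

end residual

/- ### the augmented flow -/

/-- the arc of `P` is cancelled by the augmenting walk `W` -/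
def Canc (W : List (V × Bool)) (ab : V × V) : Prop :=
  ((ab.2, false), (ab.1, true)) ∈ arcs W

/-- forward arc of the augmenting walk `W` -/
def WFwd (W : List (V × Bool)) (ab : V × V) : Prop :=
  ((ab.1, true), (ab.2, false)) ∈ arcs W ∧ ab.1 ≠ ab.2

/-- the arcs of the augmented flow -/
def FF (P : List V) (W : List (V × Bool)) (ab : V × V) : Prop :=
  (ab ∈ arcs P ∧ ¬ Canc W ab) ∨ WFwd W ab

section flow

variable {A : V → V → Prop} {r v : V} {P : List V} {W : List (V × Bool)}

variable (hP : IsPath A P r v) (hW : IsPath (Dgr A P r v) W (r, true) (v, false))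
  (hvr : v ≠ r)

include hP

lemma intl_of_target {a b : V} (hab : (a, b) ∈ arcs P) (hbv : b ≠ v) : Intl P r v b := by
  refine ⟨arcs_snd_mem hab, ?_, hbv⟩
  have hbh := arc_snd_ne_head hP.nodup hab hP.ne_nil
  rw [hP.head_eq] at hbh
  exact hbh

include hW

lemma ffA {a b : V} (h : FF P W (a, b)) : A a b := by
  rcases h with ⟨h1, _⟩ | ⟨h1, hne⟩
  · exact hP.arc_mem h1
  · rcases hW.arc_mem h1 with ⟨_, _, h3⟩ | ⟨_, h2, _⟩ | ⟨_, h2, _, _⟩ | ⟨_, _, h3, _⟩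
    · exact h3
    · simp at h2
    · simp at h2
    · exact absurd h3 hne

include hvr

lemma ffInUnique {w a a' : V} (hwv : w ≠ v)
    (h : FF P W (a, w)) (h' : FF P W (a', w)) : a = a' := by
  have key : ∀ x y : V, (x, w) ∈ arcs P → ¬ Canc W (x, w) → WFwd W (y, w) → False := by
    intro x y hxP hxC hyW
    have hint : Intl P r v w := intl_of_target hP hxP hwv
    have hmem : (w, false) ∈ W := arcs_snd_mem hyW.1
    obtain ⟨z, hzP, hzW⟩ := exitF hP hW hvr hint hmem
    have : z = x := arc_pred_unique hP.nodup hzP hxP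
    subst this
    exact hxC hzW
  rcases h with ⟨h1, h2⟩ | h3 <;> rcases h' with ⟨h1', h2'⟩ | h3'
  · exact arc_pred_unique hP.nodup h1 h1'
  · exact (key a a' h1 h2 h3').elim
  · exact (key a' a h1' h2' h3).elim
  · have := arc_pred_unique hW.nodup h3.1 h3'.1
    simpa using congrArg Prod.fst this

lemma ffOutExists {w a : V} (hwr : w ≠ r) (hwv : w ≠ v)
    (hin : FF P W (a, w)) : ∃ c, FF P W (w, c) := by
  rcases hin with ⟨hinP, hinC⟩ | ⟨hfw, hane⟩
  · -- incoming arc of the original path, not cancelled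
    have hint : Intl P r v w := intl_of_target hP hinP hwv
    obtain ⟨z, hz⟩ := exists_succ_arc hP.ne_nil hint.1 (by rw [hP.getLast_eq]; exact hwv)
    by_cases hCz : Canc W (w, z)
    · have hmemT : (w, true) ∈ W := arcs_snd_mem hCz
      rcases exitT hP hW hvr hmemT with ⟨c, hc, hcw, _⟩ | hvrev
      · exact ⟨c, Or.inr ⟨hc, fun h => hcw h.symm⟩⟩
      · exfalso
        have hmemF : (w, false) ∈ W := arcs_snd_mem hvrev
        obtain ⟨x, hxP, hxW⟩ := exitF hP hW hvr hint hmemF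
        have : x = a := arc_pred_unique hP.nodup hxP hinP
        subst this
        exact hinC hxW
    · exact ⟨z, Or.inl ⟨hz, hCz⟩⟩
  · -- incoming forward arc of the walk
    have hmemF : (w, false) ∈ W := arcs_snd_mem hfw
    by_cases hwP : w ∈ P
    · have hint : Intl P r v w := ⟨hwP, hwr, hwv⟩
      obtain ⟨z, hz⟩ := exists_succ_arc hP.ne_nil hwP (by rw [hP.getLast_eq]; exact hwv)
      by_cases hCz : Canc W (w, z)
      · have hmemT : (w, true) ∈ W := arcs_snd_mem hCz
        rcases exitT hP hW hvr hmemT with ⟨c, hc, hcw, _⟩ | hvrev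
        · exact ⟨c, Or.inr ⟨hc, fun h => hcw h.symm⟩⟩
        · exfalso
          have := arc_pred_unique hW.nodup hfw hvrev
          exact hane (by simpa using congrArg Prod.fst this)
      · exact ⟨z, Or.inl ⟨hz, hCz⟩⟩
    · -- off the path: the walk moves through the vertex
      have hne : ((w, false) : V × Bool) ≠ W.getLast hW.ne_nil := by
        rw [hW.getLast_eq]
        intro hc
        exact hwv (congrArg Prod.fst hc)
      obtain ⟨s', hs'⟩ := exists_succ_arc hW.ne_nil hmemF hne
      obtain ⟨c, bc⟩ := s'
      rcases hW.arc_mem hs' with ⟨h1, h2, h3⟩ | ⟨h1, h2, h3⟩ | ⟨h1, h2, h3, h4⟩ | ⟨h1, h2, h3, h4⟩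
      · simp at h1
      · simp only at h2 h3
        exact absurd (arcs_snd_mem h3) hwP
      · simp only at h2 h3
        subst h2
        have hcw : c = w := h3.symm
        subst hcw
        have hmemT : (c, true) ∈ W := arcs_snd_mem hs'
        rcases exitT hP hW hvr hmemT with ⟨d, hd, hdw, _⟩ | hvrev
        · exact ⟨d, Or.inr ⟨hd, fun h => hdw h.symm⟩⟩
        · exact (arc_asymm hW.nodup hs' hvrev).elim
      · simp at h1

lemma ffNotIntoR {a : V} (h : FF P W (a, r)) : False := by
  rcases h with ⟨h1, _⟩ | ⟨h1, _⟩
  · have := arc_snd_ne_head hP.nodup h1 hP.ne_nil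
    rw [hP.head_eq] at this
    exact this rfl
  · exact rF_not_mem hP hW hvr (arcs_snd_mem h1)

end flow

/- ### augmentation: residual reachability gives two disjoint paths -/

lemma aug {A : V → V → Prop} {r v : V} {P : List V}
    (hP : IsPath A P r v) (hvr : v ≠ r) (hnadj : ¬ A r v)
    (hres : Res A P r v v false) : BiReachable A r v := by
  classical
  have hlen2 : 2 ≤ P.length := hP.length_ge_two (fun h => hvr h.symm)
  have h0 : P[0]'(by omega) = r := by
    have := hP.head_eq; rw [List.head_eq_getElem] at this; exact this
  have hlast : P[P.length - 1]'(by omega) = v := by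
    have := hP.getLast_eq; rw [List.getLast_eq_getElem] at this; exact this
  have hm2 : 3 ≤ P.length := by
    by_contra hcon
    have hl2 : P.length = 2 := by omega
    have harc : (P[0]'(by omega), P[1]'(by omega)) ∈ arcs P :=
      mem_arcs_iff.mpr ⟨0, by omega, rfl, rfl⟩
    apply hnadj
    have h1 : P[1]'(by omega) = v := by rw [← hlast]; congr 1; omega
    rw [h0, h1] at harc
    exact hP.arc_mem harc
  obtain ⟨W, hW⟩ := reflTransGen_isPath hres
  -- the first vertex of P after r
  have hb1arc : (r, P[1]'(by omega)) ∈ arcs P := by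
    refine mem_arcs_iff.mpr ⟨0, by omega, h0, rfl⟩
  set b1 := P[1]'(by omega) with hb1def
  have hb1r : b1 ≠ r := by
    intro hc
    have := (hP.nodup.getElem_inj_iff).mp (hc.trans h0.symm)
    omega
  have hb1v : b1 ≠ v := by
    intro hc
    have := (hP.nodup.getElem_inj_iff).mp (hc.trans hlast.symm)
    omega
  have hb1F : FF P W (r, b1) := by
    refine Or.inl ⟨hb1arc, fun hC => ?_⟩
    exact arc_snd_ne_head hW.nodup hC hW.ne_nil (by rw [hW.head_eq])
  -- the first vertex of the augmenting walk after r
  obtain ⟨s', hs'⟩ := exists_succ_arc hW.ne_nil hW.start_mem (by rw [hW.getLast_eq]; simp)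
  obtain ⟨b2, bb⟩ := s'
  have hb2W : ((r, true), (b2, false)) ∈ arcs W ∧ A r b2 := by
    rcases hW.arc_mem hs' with ⟨h1, h2, h3⟩ | ⟨h1, h2, h3⟩ | ⟨h1, h2, h3, h4⟩ | ⟨h1, h2, h3, h4⟩
    · simp only at h2 h3; subst h2; exact ⟨hs', h3⟩
    · simp at h1
    · simp at h1
    · exact absurd rfl h4.2.1
  have hb2r : b2 ≠ r := by
    intro hc
    exact rF_not_mem hP hW hvr (hc ▸ arcs_snd_mem hb2W.1)
  have hb2v : b2 ≠ v := fun hc => hnadj (hc ▸ hb2W.2)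
  have hb2F : FF P W (r, b2) := Or.inr ⟨hb2W.1, fun h => hb2r h.symm⟩
  have hb2b1 : b2 ≠ b1 := by
    intro hc
    exact noFwdP hP hW hvr hm2 hb2W.1 (hc ▸ hb1arc)
  -- the flow as a finite arc set
  set FS : Finset (V × V) :=
    ((arcs P ++ (arcs W).map (fun ss => (ss.1.1, ss.2.1))).toFinset).filter (FF P W)
    with hFSdef
  have hFSmem : ∀ ab : V × V, ab ∈ FS ↔ FF P W ab := by
    intro ab
    rw [hFSdef, Finset.mem_filter, List.mem_toFinset, List.mem_append]
    constructor
    · exact fun h => h.2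
    · intro h
      refine ⟨?_, h⟩
      rcases h with ⟨h1, _⟩ | ⟨h1, _⟩
      · exact Or.inl h1
      · refine Or.inr (List.mem_map.mpr ⟨((ab.1, true), (ab.2, false)), h1, rfl⟩)
  set F1 : Finset (V × V) := (FS.erase (r, b1)).erase (r, b2) with hF1def
  have hsub1 : ∀ x ∈ F1, x ∈ FS := by
    intro x hx
    exact Finset.mem_of_mem_erase (Finset.mem_of_mem_erase hx)
  have hmemF1 : ∀ a b : V, a ≠ r → FF P W (a, b) → (a, b) ∈ F1 := by
    intro a b har h
    rw [hF1def]
    refine Finset.mem_erase.mpr ⟨?_, Finset.mem_erase.mpr ⟨?_, (hFSmem _).mpr h⟩⟩ <;>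
      exact fun hc => har (congrArg Prod.fst hc)
  -- first path
  obtain ⟨p1, hp1⟩ : ∃ p : List V, IsPath (fun x y => (x, y) ∈ F1) p b1 v := by
    apply walkLemma FS.card F1 b1 v
    · exact Finset.card_le_card (fun x hx => hsub1 x hx)
    · exact hb1v
    · intro w hwv hw
      rcases hw with rfl | ⟨a, haw⟩
      · obtain ⟨c, hc⟩ := ffOutExists hP hW hvr hb1r hwv hb1F
        exact ⟨c, hmemF1 _ _ hb1r hc⟩
      · have haw' : FF P W (a, w) := (hFSmem _).mp (hsub1 _ haw)
        have hwr : w ≠ r := fun h => ffNotIntoR hP hW hvr (h ▸ haw')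
        obtain ⟨c, hc⟩ := ffOutExists hP hW hvr hwr hwv haw'
        exact ⟨c, hmemF1 _ _ hwr hc⟩
    · intro w hwv a a' h h'
      exact ffInUnique hP hW hvr hwv ((hFSmem _).mp (hsub1 _ h)) ((hFSmem _).mp (hsub1 _ h'))
    · intro a ha
      have h1 : FF P W (a, b1) := (hFSmem _).mp (hsub1 _ ha)
      have : a = r := ffInUnique hP hW hvr hb1v h1 hb1F
      subst this
      exact (Finset.mem_erase.mp (Finset.mem_of_mem_erase ha)).1 rfl
  have hp1head : p1.head hp1.ne_nil = b1 := hp1.head_eq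
  have hrp1 : r ∉ p1 := by
    intro hmem
    by_cases hh : r = p1.head hp1.ne_nil
    · rw [hp1head] at hh; exact hb1r hh.symm
    · obtain ⟨x, hx⟩ := exists_pred_arc hp1.ne_nil hmem hh
      exact ffNotIntoR hP hW hvr ((hFSmem _).mp (hsub1 _ (hp1.arc_mem hx)))
  have hb2p1 : b2 ∉ p1 := by
    intro hmem
    by_cases hh : b2 = p1.head hp1.ne_nil
    · rw [hp1head] at hh; exact hb2b1 hh
    · obtain ⟨x, hx⟩ := exists_pred_arc hp1.ne_nil hmem hh
      have h1 : FF P W (x, b2) := (hFSmem _).mp (hsub1 _ (hp1.arc_mem hx))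
      have : x = r := ffInUnique hP hW hvr hb2v h1 hb2F
      subst this
      exact (Finset.mem_erase.mp (hp1.arc_mem hx)).1 rfl
  -- second path
  set F2 : Finset (V × V) := F1 \ (arcs p1).toFinset with hF2def
  have hsub2 : ∀ x ∈ F2, x ∈ F1 := by
    intro x hx
    exact (Finset.mem_sdiff.mp hx).1
  have hmemF2 : ∀ a b : V, a ≠ r → FF P W (a, b) → ((a, b) ∈ arcs p1 → False) →
      (a, b) ∈ F2 := by
    intro a b har h hnp
    rw [hF2def]
    refine Finset.mem_sdiff.mpr ⟨hmemF1 _ _ har h, fun hc => hnp (List.mem_toFinset.mp hc)⟩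
  obtain ⟨p2, hp2⟩ : ∃ p : List V, IsPath (fun x y => (x, y) ∈ F2) p b2 v := by
    apply walkLemma FS.card F2 b2 v
    · exact Finset.card_le_card (fun x hx => hsub1 x (hsub2 x hx))
    · exact hb2v
    · intro w hwv hw
      have hkey : FF P W (r, w) ∨ (∃ a, FF P W (a, w)) → True := fun _ => trivial
      -- establish: w ∉ p1, w ≠ r, and an incoming FF arc
      have hmain : w ≠ r ∧ w ∉ p1 ∧ ∃ a, FF P W (a, w) := by
        rcases hw with rfl | ⟨a, haw⟩
        · exact ⟨hb2r, hb2p1, r, hb2F⟩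
        · have haw' : FF P W (a, w) := (hFSmem _).mp (hsub1 _ (hsub2 _ haw))
          have hwr : w ≠ r := fun h => ffNotIntoR hP hW hvr (h ▸ haw')
          refine ⟨hwr, ?_, a, haw'⟩
          intro hwp1
          by_cases hh : w = p1.head hp1.ne_nil
          · rw [hp1head] at hh
            have : a = r := by
              apply ffInUnique hP hW hvr hwv haw'
              rw [hh]; exact hb1F
            subst this
            have := hsub2 _ haw
            rw [hh] at this
            exact (Finset.mem_erase.mp (Finset.mem_of_mem_erase this)).1 rfl
          · obtain ⟨x, hx⟩ := exists_pred_arc hp1.ne_nil hwp1 hh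
            have h1 : FF P W (x, w) := (hFSmem _).mp (hsub1 _ (hp1.arc_mem hx))
            have : a = x := ffInUnique hP hW hvr hwv haw' h1
            subst this
            exact (Finset.mem_sdiff.mp haw).2 (List.mem_toFinset.mpr hx)
      obtain ⟨hwr, hwp1, a, haF⟩ := hmain
      obtain ⟨c, hc⟩ := ffOutExists hP hW hvr hwr hwv haF
      refine ⟨c, hmemF2 _ _ hwr hc ?_⟩
      intro harc
      exact hwp1 (arcs_fst_mem harc)
    · intro w hwv a a' h h'
      exact ffInUnique hP hW hvr hwv ((hFSmem _).mp (hsub1 _ (hsub2 _ h)))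
        ((hFSmem _).mp (hsub1 _ (hsub2 _ h')))
    · intro a ha
      have h1 : FF P W (a, b2) := (hFSmem _).mp (hsub1 _ (hsub2 _ ha))
      have : a = r := ffInUnique hP hW hvr hb2v h1 hb2F
      subst this
      exact (Finset.mem_erase.mp (hsub2 _ ha)).1 rfl
  have hp2head : p2.head hp2.ne_nil = b2 := hp2.head_eq
  have hrp2 : r ∉ p2 := by
    intro hmem
    by_cases hh : r = p2.head hp2.ne_nil
    · rw [hp2head] at hh; exact hb2r hh.symm
    · obtain ⟨x, hx⟩ := exists_pred_arc hp2.ne_nil hmem hh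
      exact ffNotIntoR hP hW hvr ((hFSmem _).mp (hsub1 _ (hsub2 _ (hp2.arc_mem hx))))
  -- disjointness
  have hdisj12 : ∀ x, x ∈ p1 → x ∈ p2 → x = v := by
    intro x hx1 hx2
    by_contra hxv
    have hxb2 : x ≠ b2 := fun h => hb2p1 (h ▸ hx1)
    obtain ⟨a2, ha2⟩ := exists_pred_arc hp2.ne_nil hx2 (by rw [hp2head]; exact hxb2)
    have ha2F : FF P W (a2, x) := (hFSmem _).mp (hsub1 _ (hsub2 _ (hp2.arc_mem ha2)))
    by_cases hh : x = b1
    · have : a2 = r := by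
        apply ffInUnique hP hW hvr hxv ha2F
        rw [hh]; exact hb1F
      subst this
      have := hsub2 _ (hp2.arc_mem ha2)
      rw [hh] at this
      exact (Finset.mem_erase.mp (Finset.mem_of_mem_erase this)).1 rfl
    · have hh' : x ≠ p1.head hp1.ne_nil := by rw [hp1head]; exact hh
      obtain ⟨a1, ha1⟩ := exists_pred_arc hp1.ne_nil hx1 hh'
      have ha1F : FF P W (a1, x) := (hFSmem _).mp (hsub1 _ (hp1.arc_mem ha1))
      have : a2 = a1 := ffInUnique hP hW hvr hxv ha2F ha1F
      subst this
      exact (Finset.mem_sdiff.mp (hp2.arc_mem ha2)).2 (List.mem_toFinset.mpr ha1)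
  -- assemble the two paths
  have hp1A : IsPath A p1 b1 v :=
    hp1.mono (fun x y h => ffA hP hW ((hFSmem _).mp (hsub1 _ h)))
  have hp2A : IsPath A p2 b2 v :=
    hp2.mono (fun x y h => ffA hP hW ((hFSmem _).mp (hsub1 _ (hsub2 _ h))))
  have hPP : IsPath A (r :: p1) r v := hp1A.cons (ffA hP hW hb1F) hrp1
  have hQQ : IsPath A (r :: p2) r v := hp2A.cons (ffA hP hW hb2F) hrp2
  refine ⟨r :: p1, r :: p2, ?_, hPP, hQQ, ?_⟩
  · intro hc
    have hpp : p1 = p2 := by injection hc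
    have h2 : p2.head? = some b1 := hpp ▸ hp1.2.1
    rw [hp2.2.1] at h2
    exact hb2b1 (by injection h2)
  · intro x hx1 hx2
    rcases List.mem_cons.mp hx1 with rfl | hx1'
    · exact Or.inl rfl
    · rcases List.mem_cons.mp hx2 with rfl | hx2'
      · exact Or.inl rfl
      · exact Or.inr (hdisj12 x hx1' hx2')

/- ### cut extraction: no residual reachability gives a cut vertex -/

lemma cut {A : V → V → Prop} {r v : V} {P : List V}
    (hP : IsPath A P r v) (hvr : v ≠ r)
    (hres : ¬ Res A P r v v false) :
    ∃ u, u ≠ r ∧ u ≠ v ∧ ∀ p, IsPath A p r v → u ∈ p := by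
  classical
  have hlen2 : 2 ≤ P.length := hP.length_ge_two (fun h => hvr h.symm)
  have h0 : P[0]'(by omega) = r := by
    have := hP.head_eq; rw [List.head_eq_getElem] at this; exact this
  have hlast : P[P.length - 1]'(by omega) = v := by
    have := hP.getLast_eq; rw [List.getLast_eq_getElem] at this; exact this
  have hres1 : Res A P r v (P[1]'(by omega)) false := by
    have harc : (P[0]'(by omega), P[1]'(by omega)) ∈ arcs P :=
      mem_arcs_iff.mpr ⟨0, by omega, rfl, rfl⟩
    rw [h0] at harc
    exact Res.base.fwd (hP.arc_mem harc)
  set Qp : ℕ → Prop := fun i => ∃ h : i < P.length, 1 ≤ i ∧ Res A P r v (P[i]'h) false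
    with hQpdef
  have hQ1 : Qp 1 := ⟨by omega, le_refl 1, hres1⟩
  set t := Nat.findGreatest Qp (P.length - 1) with htdef
  have ht1 : 1 ≤ t := Nat.le_findGreatest (by omega) hQ1
  have hQt : Qp t := Nat.findGreatest_spec (by omega : 1 ≤ P.length - 1) hQ1
  obtain ⟨htlen, -, hRt⟩ := hQt
  have htle : t ≤ P.length - 1 := Nat.findGreatest_le _
  have htm : t < P.length - 1 := by
    rcases lt_or_eq_of_le htle with h | h
    · exact h
    · exfalso
      apply hres
      have hPt : P[t]'htlen = v := by rw [← hlast]; congr 1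
      exact hPt ▸ hRt
  have hmax : ∀ i, ∀ h : i < P.length, 1 ≤ i → Res A P r v (P[i]'h) false → i ≤ t := by
    intro i h h1 hr
    by_contra hgt
    have hg := Nat.findGreatest_is_greatest (P := Qp) (n := P.length - 1) (k := i)
      (by rw [← htdef]; omega) (by omega)
    exact hg ⟨h, h1, hr⟩
  have hDC : ∀ d j, ∀ hj : j < P.length, j + d = t → 1 ≤ j →
      Res A P r v (P[j]'hj) false := by
    intro d
    induction d with
    | zero =>
      intro j hj hsum h1
      obtain rfl : j = t := by omega
      exact hRt
    | succ d ih =>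
      intro j hj hsum h1
      have hj1 : j + 1 < P.length := by omega
      have hr1 : Res A P r v (P[j+1]'hj1) false := ih (j+1) hj1 (by omega) (by omega)
      have harc : (P[j]'hj, P[j+1]'hj1) ∈ arcs P := mem_arcs_iff.mpr ⟨j, hj1, rfl, rfl⟩
      refine (hr1.revArc harc).vrev ⟨List.getElem_mem _, ?_, ?_⟩
      · intro hc
        have := (hP.nodup.getElem_inj_iff).mp (hc.trans h0.symm)
        omega
      · intro hc
        have := (hP.nodup.getElem_inj_iff).mp (hc.trans hlast.symm)
        omega
  set u := P[t]'htlen with hudef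
  have hur : u ≠ r := by
    intro hc
    have := (hP.nodup.getElem_inj_iff).mp ((hudef.symm.trans hc).trans h0.symm)
    omega
  have huv : u ≠ v := by
    intro hc
    have := (hP.nodup.getElem_inj_iff).mp ((hudef.symm.trans hc).trans hlast.symm)
    omega
  refine ⟨u, hur, huv, ?_⟩
  intro Q hQ
  by_contra hu
  have hQne := hQ.ne_nil
  have hQpos : 0 < Q.length := List.length_pos_iff.mpr hQne
  have hQ0 : Q[0]'hQpos = r := by
    have := hQ.head_eq; rw [List.head_eq_getElem] at this; exact this
  have claim : ∀ j, ∀ hj : j < Q.length, Res A P r v (Q[j]'hj) true ∧ Q[j]'hj ≠ v := by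
    intro j
    induction j with
    | zero =>
      intro hj
      rw [hQ0]
      exact ⟨Res.base, fun h => hvr h.symm⟩
    | succ j ih =>
      intro hj
      have hj' : j < Q.length := by omega
      obtain ⟨hRj, -⟩ := ih hj'
      have harcQ : (Q[j]'hj', Q[j+1]'hj) ∈ arcs Q := mem_arcs_iff.mpr ⟨j, hj, rfl, rfl⟩
      have hRf : Res A P r v (Q[j+1]'hj) false := hRj.fwd (hQ.arc_mem harcQ)
      have hnev : Q[j+1]'hj ≠ v := fun hc => hres (hc ▸ hRf)
      refine ⟨?_, hnev⟩
      by_cases hint : Intl P r v (Q[j+1]'hj)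
      · obtain ⟨hmem, hner, -⟩ := hint
        obtain ⟨i, hi, hie⟩ := List.mem_iff_getElem.mp hmem
        have h1i : 1 ≤ i := by
          rcases Nat.eq_zero_or_pos i with rfl | h
          · exact absurd (hie.symm.trans h0) hner
          · exact h
        have hit : i ≤ t := hmax i hi h1i (by rw [hie]; exact hRf)
        have hineq : i ≠ t := by
          intro hc
          apply hu
          have : u = Q[j+1]'hj := by
            rw [hudef, ← hie]
            congr 1
            omega
          rw [this]
          exact List.getElem_mem hj
        have hi1 : i + 1 < P.length := by omega
        have hri1 : Res A P r v (P[i+1]'hi1) false :=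
          hDC (t - (i+1)) (i+1) hi1 (by omega) (by omega)
        have harcP : (P[i]'hi, P[i+1]'hi1) ∈ arcs P := mem_arcs_iff.mpr ⟨i, hi1, rfl, rfl⟩
        have hT : Res A P r v (P[i]'hi) true := hri1.revArc harcP
        rw [← hie]
        exact hT
      · exact hRf.vfwd hint
  have hQl : Q[Q.length - 1]'(by omega) = v := by
    have := hQ.getLast_eq; rw [List.getLast_eq_getElem] at this; exact this
  exact (claim (Q.length - 1) (by omega)).2 hQl


/-- Menger-type characterization of diblocks: a vertex `v ≠ r`
lies outside the diblock of `r` iff some vertex `u ∉ {r,v}` meets all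
`r`-`v`-paths; conversely for `v` in the diblock other than `r` and its
out-neighbours, no such cut vertex exists. -/
theorem diblock_menger {V : Type*}
    (A : V → V → Prop) (r : V) (hreach : ∀ v, Reaches A r v)
    (v : V) (hvr : v ≠ r) :
    (v ∉ diblock A r →
      ∃ u, u ≠ r ∧ u ≠ v ∧ ∀ p, IsPath A p r v → u ∈ p) ∧
    (v ∈ diblock A r → ¬ A r v →
      ¬ ∃ u, u ≠ r ∧ u ≠ v ∧ ∀ p, IsPath A p r v → u ∈ p) := by
  constructor
  · intro hv
    rw [diblock] at hv
    simp only [Set.mem_union, Set.mem_setOf_eq, Set.mem_singleton_iff] at hv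
    push_neg at hv
    obtain ⟨⟨hnbi, -⟩, hnadj⟩ := hv
    obtain ⟨P, hP⟩ := hreach v
    by_cases hres : Res A P r v v false
    · exact absurd (aug hP hvr hnadj hres) hnbi
    · exact cut hP hvr hres
  · intro hv hnadj hex
    obtain ⟨u, hur, huv, hcut⟩ := hex
    have hbi : BiReachable A r v := by
      rw [diblock] at hv
      simp only [Set.mem_union, Set.mem_setOf_eq, Set.mem_singleton_iff] at hv
      rcases hv with (hbi | hr) | hadj
      · exact hbi
      · exact absurd hr hvr
      · exact absurd hadj hnadj
    obtain ⟨p, q, hpq, hp, hq, hdisj⟩ := hbi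
    rcases hdisj u (hcut p hp) (hcut q hq) with h | h
    · exact hur h
    · exact huv h

end CutPaper
end

section
/- Every arc of a digraph H with r-rooted cut decomposition (T̂, {B_x}) is either contained in the subgraph induced by some diblock B_x, or is a back arc going from a diblock B_y to a diblock B_x where x is a proper ancestor of y in T̂. -/
namespace CutPaper

variable {V : Type*}

/-! ### Auxiliary lemmas -/

section Aux

variable {A : V → V → Prop} {r : V} {d : PreDecomp V}

lemma isPath_singleton_s10 (R : V → V → Prop) (x : V) : IsPath R [x] x x :=
  ⟨List.isChain_singleton x, rfl, rfl, List.nodup_singleton x⟩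

lemma isPath_concat {R : V → V → Prop} {p : List V} {x u v : V}
    (hp : IsPath R p x u) (huv : R u v) (hv : v ∉ p) : IsPath R (p ++ [v]) x v := by
  obtain ⟨hc, hh, hl, hn⟩ := hp
  refine ⟨?_, ?_, List.getLast?_concat, ?_⟩
  · unfold List.Chain'
    rw [List.isChain_append]
    refine ⟨hc, List.isChain_singleton v, ?_⟩
    intro a ha b hb
    simp only [List.head?_cons, Option.mem_some_iff] at hb
    rw [hl] at ha
    simp only [Option.mem_some_iff] at ha
    subst ha; subst hb; exact huv
  · rw [List.head?_append, hh]; rfl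
  · rw [List.nodup_append']
    refine ⟨hn, List.nodup_singleton v, ?_⟩
    intro a ha hb
    simp only [List.mem_singleton] at hb
    subst hb; exact hv ha

lemma isPath_prefix {R : V → V → Prop} {l₁ l₂ : List V} {w x u : V}
    (h : IsPath R (l₁ ++ w :: l₂) x u) : IsPath R (l₁ ++ [w]) x w := by
  obtain ⟨hc, hh, hl, hn⟩ := h
  have he : l₁ ++ w :: l₂ = (l₁ ++ [w]) ++ l₂ := by simp
  rw [he] at hc hh hn
  refine ⟨(List.isChain_append.mp hc).1, ?_, List.getLast?_concat, (List.nodup_append'.mp hn).1⟩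
  rw [List.head?_append] at hh
  cases hq : (l₁ ++ [w]).head? with
  | none =>
    exfalso
    have : (l₁ ++ [w]) ≠ [] := by simp
    rw [List.head?_eq_none_iff] at hq
    exact this hq
  | some a => rw [hq] at hh; simpa using hh

lemma isPath_suffix {R : V → V → Prop} {l₁ l₂ : List V} {w x u : V}
    (h : IsPath R (l₁ ++ w :: l₂) x u) : IsPath R (w :: l₂) w u := by
  obtain ⟨hc, hh, hl, hn⟩ := h
  refine ⟨(List.isChain_append.mp hc).2.1, rfl, ?_, (List.nodup_append'.mp hn).2.1⟩
  rw [List.getLast?_append] at hl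
  cases hq : (w :: l₂).getLast? with
  | none => simp [List.getLast?_eq_none_iff] at hq
  | some a =>
    rw [hq] at hl
    rw [Option.or] at hl
    simp only [Option.some.injEq] at hl
    rw [hl]

lemma isPath_glue {R : V → V → Prop} {s t : List V} {x m u : V}
    (h₁ : IsPath R (s ++ [m]) x m) (h₂ : IsPath R (m :: t) m u)
    (hdisj : ∀ w ∈ s, w ∉ m :: t) :
    IsPath R (s ++ m :: t) x u := by
  obtain ⟨hc1, hh1, hl1, hn1⟩ := h₁
  obtain ⟨hc2, hh2, hl2, hn2⟩ := h₂
  refine ⟨?_, ?_, ?_, ?_⟩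
  · unfold List.Chain'
    rw [List.isChain_append]
    refine ⟨(List.isChain_append.mp hc1).1, hc2, ?_⟩
    intro a ha b hb
    simp only [List.head?_cons, Option.mem_some_iff] at hb
    subst hb
    exact (List.isChain_append.mp hc1).2.2 a ha m (by simp)
  · cases s with
    | nil => simpa using hh1
    | cons a s' => simpa using hh1
  · rw [List.getLast?_append, hl2]; rfl
  · rw [List.nodup_append']
    exact ⟨(List.nodup_append'.mp hn1).1, hn2, fun a ha hb => hdisj a ha hb⟩

lemma chain'_asub_mem_tail {S : Set V} {m : V} {t : List V}
    (hc : (m :: t).Chain' (Asub A S)) : ∀ z ∈ t, z ∈ S := by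
  induction t generalizing m with
  | nil => simp
  | cons a t' ih =>
    intro z hz
    rcases List.mem_cons.mp hz with rfl | hz
    · exact ((List.isChain_cons_cons.mp hc).1).2.2
    · exact ih (List.isChain_cons_cons.mp hc).2 z hz

lemma chain'_asub_of_mem {S S' : Set V} {l : List V}
    (hc : l.Chain' (Asub A S)) (hmem : ∀ z ∈ l, z ∈ S') : l.Chain' (Asub A S') := by
  induction l with
  | nil => exact List.isChain_nil
  | cons a t ih =>
    cases t with
    | nil => exact List.isChain_singleton a
    | cons b t' =>
      unfold List.Chain' at hc ⊢
      rw [List.isChain_cons_cons] at hc ⊢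
      refine ⟨⟨hc.1.1, hmem a (by simp), hmem b (by simp)⟩, ?_⟩
      exact ih hc.2 (fun z hz => hmem z (List.mem_cons_of_mem _ hz))

lemma exists_first_mem {l : List V} {S : Set V} (h : ∃ a ∈ l, a ∈ S) :
    ∃ α z β, l = α ++ z :: β ∧ z ∈ S ∧ ∀ w ∈ α, w ∉ S := by
  classical
  induction l with
  | nil => simp at h
  | cons a t ih =>
    by_cases ha : a ∈ S
    · exact ⟨[], a, t, rfl, ha, by simp⟩
    · obtain ⟨b, hb, hbS⟩ := h
      rcases List.mem_cons.mp hb with rfl | hb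
      · exact absurd hbS ha
      · obtain ⟨α, z, β, hsplit, hz, hα⟩ := ih ⟨b, hb, hbS⟩
        refine ⟨a :: α, z, β, by rw [hsplit]; rfl, hz, ?_⟩
        intro w hw
        rcases List.mem_cons.mp hw with rfl | hw
        · exact ha
        · exact hα w hw

lemma first_touch_unique {B : Set V} :
    ∀ (l l₁ l₂ m₁ m₂ : List V) (a b : V),
    l = l₁ ++ a :: l₂ → l = m₁ ++ b :: m₂ → a ∈ B → b ∈ B →
    (∀ y ∈ l₁, y ∉ B) → (∀ y ∈ m₁, y ∉ B) → a = b := by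
  intro l
  induction l with
  | nil =>
    intro l₁ l₂ m₁ m₂ a b h1 h2 _ _ _ _
    exact absurd h1.symm (List.append_ne_nil_of_right_ne_nil l₁ (List.cons_ne_nil a l₂))
  | cons c t ih =>
    intro l₁ l₂ m₁ m₂ a b h1 h2 ha hb hl hm
    cases l₁ with
    | nil =>
      cases m₁ with
      | nil =>
        simp only [List.nil_append, List.cons.injEq] at h1 h2
        rw [← h1.1, ← h2.1]
      | cons e m' =>
        simp only [List.nil_append, List.cons_append, List.cons.injEq] at h1 h2
        exact absurd (h2.1 ▸ h1.1 ▸ ha) (hm e (by simp))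
    | cons dd l' =>
      cases m₁ with
      | nil =>
        simp only [List.nil_append, List.cons_append, List.cons.injEq] at h1 h2
        exact absurd (h1.1 ▸ h2.1 ▸ hb) (hl dd (by simp))
      | cons e m' =>
        simp only [List.cons_append, List.cons.injEq] at h1 h2
        exact ih l' l₂ m' m₂ a b h1.2 h2.2 ha hb
          (fun y hy => hl y (List.mem_cons_of_mem _ hy))
          (fun y hy => hm y (List.mem_cons_of_mem _ hy))

lemma lastTouch_unique {B : Set V} {p : List V} {a b : V}
    (ha : LastTouch B p a) (hb : LastTouch B p b) : a = b := by
  obtain ⟨p₁, p₂, hp, haB, hp₂⟩ := ha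
  obtain ⟨q₁, q₂, hq, hbB, hq₂⟩ := hb
  have h1 : p.reverse = p₂.reverse ++ a :: p₁.reverse := by rw [hp]; simp
  have h2 : p.reverse = q₂.reverse ++ b :: q₁.reverse := by rw [hq]; simp
  exact first_touch_unique p.reverse _ _ _ _ a b h1 h2 haB hbB
    (fun y hy => hp₂ y (by simpa using hy)) (fun y hy => hq₂ y (by simpa using hy))

/-! ### Decomposition lemmas -/

lemma mem_B_self (h : IsCutDecomp A r d) {x : V} (hx : x ∈ d.N) : x ∈ d.B x := by
  rw [h.diblock_eq x hx]
  exact Or.inl (Or.inr rfl)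

lemma B_subset_Bstar {x : V} (hx : x ∈ d.N) : d.B x ⊆ Bstar d r x :=
  fun v hv => ⟨x, hx, Relation.ReflTransGen.refl, hv⟩

lemma Bstar_mono {x y : V} (hxy : Anc d r x y) : Bstar d r y ⊆ Bstar d r x := by
  rintro v ⟨z, hz, hyz, hv⟩
  exact ⟨z, hz, Relation.ReflTransGen.trans hyz hxy, hv⟩

lemma child_mem_B (h : IsCutDecomp A r d) {x c : V} (hx : x ∈ d.N)
    (hC : IsChild d r c x) : c ∈ d.B x := ((h.child_iff x hx c).mp hC).1

lemma child_ne (h : IsCutDecomp A r d) {x c : V} (hx : x ∈ d.N)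
    (hC : IsChild d r c x) : c ≠ x := ((h.child_iff x hx c).mp hC).2.1

lemma eq_child_of_mem_B (h : IsCutDecomp A r d) {x c w : V} (hx : x ∈ d.N)
    (hC : IsChild d r c x) (hw : w ∈ Bstar d r c) (hwB : w ∈ d.B x) : w = c := by
  rw [h.child_part x hx c hC] at hw
  rcases Set.mem_insert_iff.mp hw with rfl | hw
  · rfl
  · exact absurd hwB hw.2.1

lemma mem_partClass (h : IsCutDecomp A r d) {x c v : V} (hx : x ∈ d.N)
    (hC : IsChild d r c x) (hv : v ∈ Bstar d r c) (hvB : v ∉ d.B x) :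
    v ∈ PartClass A d r x c := by
  rw [h.child_part x hx c hC] at hv
  rcases Set.mem_insert_iff.mp hv with rfl | hv'
  · exact absurd (child_mem_B h hx hC) hvB
  · exact hv'

lemma exists_class (h : IsCutDecomp A r d) {x v : V} (hx : x ∈ d.N)
    (hv : v ∈ Bstar d r x) (hvB : v ∉ d.B x) :
    ∃ c, IsChild d r c x ∧ v ∈ PartClass A d r x c := by
  obtain ⟨z, hz, hanc, hvz⟩ := hv
  rcases Relation.ReflTransGen.cases_tail hanc with heq | ⟨c, hzc, hstep⟩
  · exact absurd (heq ▸ hvz) hvB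
  · have hC : IsChild d r c x := hstep
    have hvc : v ∈ Bstar d r c := ⟨z, hz, hzc, hvz⟩
    exact ⟨c, hC, mem_partClass h hx hC hvc hvB⟩

lemma exists_path_avoid (h : IsCutDecomp A r d) {x u v : V} (hx : x ∈ d.N)
    (hu : u ∈ d.B x) (hv : v ∉ d.B x) :
    ∃ p, IsPath (Asub A (Bstar d r x)) p x u ∧ v ∉ p := by
  have hxB : x ∈ d.B x := mem_B_self h hx
  have hvx : v ≠ x := fun h' => hv (h' ▸ hxB)
  have hvu : v ≠ u := fun h' => hv (h' ▸ hu)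
  have hu' := hu
  rw [h.diblock_eq x hx] at hu'
  rcases hu' with (hbi | hux) | harc
  · obtain ⟨p, q, _, hp, hq, hdisj⟩ := hbi
    by_cases hvp : v ∈ p
    · refine ⟨q, hq, fun hvq => ?_⟩
      rcases hdisj v hvp hvq with rfl | rfl
      · exact hvx rfl
      · exact hvu rfl
    · exact ⟨p, hp, hvp⟩
  · have : u = x := hux
    subst this
    exact ⟨[u], isPath_singleton_s10 _ _, by simpa using hvu⟩
  · by_cases hux : u = x
    · subst hux
      exact ⟨[u], isPath_singleton_s10 _ _, by simpa using hvu⟩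
    · refine ⟨[x, u], ⟨List.isChain_pair.mpr harc, rfl, by simp, ?_⟩, ?_⟩
      · simp [Ne.symm hux]
      · simp only [List.mem_cons, List.mem_singleton, not_or]
        exact ⟨hvx, ⟨hvu, by simp⟩⟩

lemma suffix_in_Bstar (h : IsCutDecomp A r d) {x w c : V} {p p₁ p₂ : List V}
    (hx : x ∈ d.N)
    (hp : IsPath (Asub A (Bstar d r x)) p x w) (hsplit : p = p₁ ++ c :: p₂)
    (hcB : c ∈ d.B x) (hp₂ : ∀ y ∈ p₂, y ∉ d.B x) :
    ∀ z ∈ p₂, z ∈ Bstar d r c := by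
  intro z hz
  have hchain : (c :: p₂).Chain' (Asub A (Bstar d r x)) := by
    have hc := hp.1
    unfold List.Chain' at hc
    rw [hsplit, List.isChain_append] at hc
    exact hc.2.1
  have hzS : z ∈ Bstar d r x := chain'_asub_mem_tail hchain z hz
  have hzB : z ∉ d.B x := hp₂ z hz
  obtain ⟨c'', hC'', hzP⟩ := exists_class h hx hzS hzB
  obtain ⟨γ, δ, hγδ⟩ := List.append_of_mem hz
  have hp' : p = (p₁ ++ c :: γ) ++ z :: δ := by rw [hsplit, hγδ]; simp
  have hpre : IsPath (Asub A (Bstar d r x)) ((p₁ ++ c :: γ) ++ [z]) x z :=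
    isPath_prefix (hp' ▸ hp)
  have hlt : LastTouch (d.B x) ((p₁ ++ c :: γ) ++ [z]) c := by
    refine ⟨p₁, γ ++ [z], by simp, hcB, ?_⟩
    intro y hy
    rcases List.mem_append.mp hy with hy | hy
    · exact hp₂ y (by rw [hγδ]; exact List.mem_append.mpr (Or.inl hy))
    · simp only [List.mem_singleton] at hy
      subst hy; exact hzB
  have hcc : c'' = c := lastTouch_unique (hzP.2.2 _ hpre) hlt
  have : z ∈ Bstar d r c'' := by
    rw [h.child_part x hx c'' hC'']
    exact Set.mem_insert_iff.mpr (Or.inr hzP)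
  rwa [hcc] at this

lemma reaches_in_Bstar (h : IsCutDecomp A r d) (hreach : ∀ v, Reaches A r v)
    {x : V} (hx : x ∈ d.N) :
    ∀ w ∈ Bstar d r x, ∃ p, IsPath (Asub A (Bstar d r x)) p x w := by
  have hanc : Relation.ReflTransGen (Step d r) x r := h.tree x hx
  clear hx
  induction hanc using Relation.ReflTransGen.head_induction_on with
  | refl =>
    intro w _
    obtain ⟨p, hc, hh, hl, hn⟩ := hreach w
    refine ⟨p, ?_, hh, hl, hn⟩
    refine hc.imp (fun a b hab => ⟨hab, ?_, ?_⟩) <;> rw [h.cover] <;> trivial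
  | head hstep hrt ih =>
    rename_i a c
    intro w hw
    have haN : a ∈ d.N := hstep.1
    have hcN : c ∈ d.N := by
      have := h.parent_mem a haN hstep.2.1
      rwa [hstep.2.2] at this
    have hCa : IsChild d r a c := hstep
    by_cases hwa : w = a
    · subst hwa
      exact ⟨[w], isPath_singleton_s10 _ _⟩
    · have hwc : w ∈ Bstar d r c := Bstar_mono (Relation.ReflTransGen.single hstep) hw
      have hwP : w ∈ PartClass A d r c a := by
        rw [h.child_part c hcN a hCa] at hw
        rcases Set.mem_insert_iff.mp hw with heq | hw'
        · exact absurd heq hwa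
        · exact hw'
      obtain ⟨p, hp⟩ := ih w hwc
      obtain ⟨p₁, p₂, hsplit, _, hp₂⟩ := hwP.2.2 p hp
      have hsub := suffix_in_Bstar h hcN hp hsplit (child_mem_B h hcN hCa) hp₂
      have hsuf : IsPath (Asub A (Bstar d r c)) (a :: p₂) a w := isPath_suffix (hsplit ▸ hp)
      have hmem : ∀ z ∈ a :: p₂, z ∈ Bstar d r a := by
        intro z hz
        rcases List.mem_cons.mp hz with rfl | hz
        · exact B_subset_Bstar haN (mem_B_self h haN)
        · exact hsub z hz
      exact ⟨a :: p₂, chain'_asub_of_mem hsuf.1 hmem, hsuf.2.1, hsuf.2.2.1, hsuf.2.2.2⟩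

lemma no_cross (h : IsCutDecomp A r d) (hreach : ∀ v, Reaches A r v)
    {x c u v : V} (hx : x ∈ d.N) (hC : IsChild d r c x)
    (hu : u ∈ Bstar d r c) (hvS : v ∈ Bstar d r x) (hvB : v ∉ d.B x) (huv : A u v) :
    v ∈ Bstar d r c := by
  classical
  by_contra hvc
  have hcB : c ∈ d.B x := child_mem_B h hx hC
  obtain ⟨y, hCy, hvP⟩ := exists_class h hx hvS hvB
  have key : ∀ Q, IsPath (Asub A (Bstar d r x)) Q x v → LastTouch (d.B x) Q c → False := by
    intro Q hQ hQc
    have hyc : y = c := lastTouch_unique (hvP.2.2 Q hQ) hQc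
    apply hvc
    rw [h.child_part x hx c hC]
    exact Set.mem_insert_iff.mpr (Or.inr (hyc ▸ hvP))
  have huS : u ∈ Bstar d r x := Bstar_mono (Relation.ReflTransGen.single hC) hu
  have harc : Asub A (Bstar d r x) u v := ⟨huv, huS, hvS⟩
  by_cases huc : u = c
  · subst huc
    obtain ⟨s, hs, hvs⟩ := exists_path_avoid h hx hcB hvB
    refine key (s ++ [v]) (isPath_concat hs harc hvs) ?_
    obtain ⟨s', hseq⟩ := List.getLast?_eq_some_iff.mp hs.2.2.1
    refine ⟨s', [v], by rw [hseq]; simp, hcB, ?_⟩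
    intro y' hy'
    simp only [List.mem_singleton] at hy'
    subst hy'; exact hvB
  · have huB : u ∉ d.B x := fun hB => huc (eq_child_of_mem_B h hx hC hu hB)
    have huP : u ∈ PartClass A d r x c := mem_partClass h hx hC hu huB
    obtain ⟨p, hp⟩ := reaches_in_Bstar h hreach hx u huS
    obtain ⟨p₁, p₂, hsplit, _, hp₂⟩ := huP.2.2 p hp
    have hsub : ∀ z ∈ p₂, z ∈ Bstar d r c := suffix_in_Bstar h hx hp hsplit hcB hp₂
    have hvp₂ : v ∉ p₂ := fun hm => hvc (hsub v hm)
    have hvnec : v ≠ c := fun h' => hvB (h' ▸ hcB)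
    by_cases hvp : v ∈ p
    · obtain ⟨s, hs, hvs⟩ := exists_path_avoid h hx hcB hvB
      have hcs : ∃ a' ∈ s, a' ∈ {w | w ∈ (c :: p₂ : List V)} := by
        obtain ⟨s', hseq⟩ := List.getLast?_eq_some_iff.mp hs.2.2.1
        exact ⟨c, by rw [hseq]; simp, by simp⟩
      obtain ⟨α, z, β, hsαβ, hzmem, hα⟩ := exists_first_mem hcs
      simp only [Set.mem_setOf_eq] at hzmem hα
      obtain ⟨γ, δ, hγδ⟩ := List.append_of_mem hzmem
      have hpδ : p = (p₁ ++ γ) ++ z :: δ := by rw [hsplit, hγδ]; simp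
      have hsufz : IsPath (Asub A (Bstar d r x)) (z :: δ) z u := isPath_suffix (hpδ ▸ hp)
      have hprez : IsPath (Asub A (Bstar d r x)) (α ++ [z]) x z := isPath_prefix (hsαβ ▸ hs)
      have hdisj : ∀ w' ∈ α, w' ∉ z :: δ := by
        intro w' hw1 hw2
        refine hα w' hw1 ?_
        rw [hγδ]
        exact List.mem_append.mpr (Or.inr hw2)
      have hQ0 : IsPath (Asub A (Bstar d r x)) (α ++ z :: δ) x u := isPath_glue hprez hsufz hdisj
      have hvQ0 : v ∉ α ++ z :: δ := by
        intro hm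
        rcases List.mem_append.mp hm with hm | hm
        · exact hvs (by rw [hsαβ]; exact List.mem_append.mpr (Or.inl hm))
        · have hvcp : v ∈ c :: p₂ := by rw [hγδ]; exact List.mem_append.mpr (Or.inr hm)
          rcases List.mem_cons.mp hvcp with h' | h'
          · exact hvnec h'
          · exact hvp₂ h'
      refine key _ (isPath_concat hQ0 harc hvQ0) ?_
      rcases List.mem_cons.mp hzmem with hzc | hzp₂
      · subst hzc
        have hγnil : γ = [] ∧ p₂ = δ := by
          cases γ with
          | nil => simpa using hγδ
          | cons g γ' =>
            exfalso
            simp only [List.cons_append, List.cons.injEq] at hγδ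
            refine hp₂ z ?_ hcB
            rw [hγδ.2]
            exact List.mem_append.mpr (Or.inr (by simp))
        obtain ⟨rfl, rfl⟩ := hγnil
        refine ⟨α, p₂ ++ [v], by simp, hcB, ?_⟩
        intro y' hy'
        rcases List.mem_append.mp hy' with h' | h'
        · exact hp₂ y' h'
        · simp only [List.mem_singleton] at h'; subst h'; exact hvB
      · have hzBc : z ∈ Bstar d r c := hsub z hzp₂
        have hzB : z ∉ d.B x := hp₂ z hzp₂
        have hzP : z ∈ PartClass A d r x c := mem_partClass h hx hC hzBc hzB
        obtain ⟨α', α'', hαsplit, _, hα''⟩ := hzP.2.2 _ hprez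
        have hδp₂ : ∀ y' ∈ δ, y' ∈ p₂ := by
          cases γ with
          | nil =>
            exfalso
            simp only [List.nil_append, List.cons.injEq] at hγδ
            exact hzB (hγδ.1 ▸ hcB)
          | cons g γ' =>
            simp only [List.cons_append, List.cons.injEq] at hγδ
            intro y' hy'
            rw [hγδ.2]
            exact List.mem_append.mpr (Or.inr (List.mem_cons_of_mem _ hy'))
        have heq : (α ++ z :: δ) ++ [v] = α' ++ c :: (α'' ++ δ ++ [v]) := by
          have h1 : α ++ z :: δ = (α ++ [z]) ++ δ := by simp
          rw [h1, hαsplit]; simp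
        refine ⟨α', α'' ++ δ ++ [v], heq, hcB, ?_⟩
        intro y' hy'
        rcases List.mem_append.mp hy' with h' | h'
        · rcases List.mem_append.mp h' with h'' | h''
          · exact hα'' y' h''
          · exact hp₂ y' (hδp₂ y' h'')
        · simp only [List.mem_singleton] at h'; subst h'; exact hvB
    · refine key (p ++ [v]) (isPath_concat hp harc hvp) ?_
      refine ⟨p₁, p₂ ++ [v], by rw [hsplit]; simp, hcB, ?_⟩
      intro y' hy'
      rcases List.mem_append.mp hy' with h' | h'
      · exact hp₂ y' h'
      · simp only [List.mem_singleton] at h'; subst h'; exact hvB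

lemma arc_from_B (h : IsCutDecomp A r d) {x u v : V} (hx : x ∈ d.N)
    (hu : u ∈ d.B x) (hvS : v ∈ Bstar d r x) (huv : A u v) :
    ∃ x' ∈ d.N, u ∈ d.B x' ∧ v ∈ d.B x' := by
  by_cases hvB : v ∈ d.B x
  · exact ⟨x, hx, hu, hvB⟩
  · obtain ⟨y, hCy, hvP⟩ := exists_class h hx hvS hvB
    obtain ⟨s, hs, hvs⟩ := exists_path_avoid h hx hu hvB
    have harc : Asub A (Bstar d r x) u v := ⟨huv, B_subset_Bstar hx hu, hvS⟩
    have hQ := isPath_concat hs harc hvs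
    have hlt : LastTouch (d.B x) (s ++ [v]) u := by
      obtain ⟨s', hseq⟩ := List.getLast?_eq_some_iff.mp hs.2.2.1
      refine ⟨s', [v], by rw [hseq]; simp, hu, ?_⟩
      intro y' hy'
      simp only [List.mem_singleton] at hy'
      subst hy'; exact hvB
    have huy : y = u := lastTouch_unique (hvP.2.2 _ hQ) hlt
    subst huy
    have hyN : y ∈ d.N := hCy.1
    have hvBy : v ∈ Bstar d r y := by
      rw [h.child_part x hx y hCy]
      exact Set.mem_insert_iff.mpr (Or.inr hvP)
    have hvB2 : v ∈ d.B y := by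
      rw [h.diblock_eq y hyN]
      exact Or.inr ⟨huv, B_subset_Bstar hyN (mem_B_self h hyN), hvBy⟩
    exact ⟨y, hyN, mem_B_self h hyN, hvB2⟩

end Aux

/-- every arc either lies inside a single diblock, or is a back
arc from a diblock `B y` to a diblock `B x` where `x` is a proper ancestor of
`y` in the decomposition tree. -/
theorem cutDecomp_arc_classification {V : Type*}
    (A : V → V → Prop) (r : V) (hreach : ∀ v, Reaches A r v)
    (d : PreDecomp V) (h : IsCutDecomp A r d) :
    ∀ u v, A u v →
      (∃ x ∈ d.N, u ∈ d.B x ∧ v ∈ d.B x) ∨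
      (∃ x ∈ d.N, ∃ y ∈ d.N, u ∈ d.B y ∧ v ∈ d.B x ∧
        Anc d r x y ∧ x ≠ y) := by
  intro u v huv
  have hu : u ∈ Bstar d r r := by rw [h.cover]; trivial
  obtain ⟨z, hzN, hzr, huz⟩ := hu
  have claim : ∀ c, Relation.ReflTransGen (Step d r) z c → c ∈ d.N → v ∈ Bstar d r c →
      ((∃ x ∈ d.N, u ∈ d.B x ∧ v ∈ d.B x) ∨
      (∃ x ∈ d.N, ∃ y ∈ d.N, u ∈ d.B y ∧ v ∈ d.B x ∧ Anc d r x y ∧ x ≠ y)) := by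
    intro c hrt
    induction hrt with
    | refl =>
      intro hcN hvc
      exact Or.inl (arc_from_B h hzN huz hvc huv)
    | tail hzb hbc ih =>
      rename_i b c'
      intro hcN hvc
      have hCb : IsChild d r b c' := hbc
      have hbN : b ∈ d.N := hbc.1
      by_cases huB : u ∈ d.B c'
      · exact Or.inl (arc_from_B h hcN huB hvc huv)
      · have hub : u ∈ Bstar d r b := ⟨z, hzN, hzb, huz⟩
        by_cases hvB : v ∈ d.B c'
        · refine Or.inr ⟨c', hcN, z, hzN, huz, hvB, Relation.ReflTransGen.tail hzb hbc, ?_⟩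
          rintro rfl
          exact huB huz
        · exact ih hbN (no_cross h hreach hcN hCb hub hvc hvB huv)
  have hvr : v ∈ Bstar d r r := by rw [h.cover]; trivial
  exact claim r (h.tree z hzN) h.root_mem hvr

end CutPaper
end
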